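/- arXiv:1901.02073 — 7 statements merged into one kernel-verified Lean document; each statement's English description precedes it below -/
import Mathlib

section
/- Let F be a finite field and C ⊆ F[D]^n an (n,k,r,∂) locally repairable convolutional code with local groups Γ_1,...,Γ_g, admitting a reduced generator matrix G(D) = Σ_{h=0}^{μ} G_h D^h such that G_0 ∈ F^{k×n} has rank k. Assume further that: k = ℓr for a positive integer ℓ; the local groups are pairwise disjoint and each has size exactly r+∂−1; and there exist ℓ local groups Γ_{i_1},...,Γ_{i_ℓ} such that the projection of the row space of G_0 onto the coordinates in Γ_{i_1} ∪ ... ∪ Γ_{i_ℓ} is injective (i.e., these ℓ local groups contain an information set of the k-dimensional linear block code generated by G_0). Then for all j ∈ ℕ, the j-th column distance satisfies d_j^c(C) ≤ (n−k)(j+1) − (k(j+1)/r − 1)(∂−1) + 1. -/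
open Polynomial Matrix Finset

noncomputable section

namespace LRCC

variable {F : Type*} [Field F] {ι : Type*} [Fintype ι] {k : ℕ}

/-- Hamming weight of a vector: number of nonzero entries. -/
def hWt {α β : Type*} [Zero β] (v : α → β) : ℕ :=
  Nat.card {a // v a ≠ 0}

/-- `G` is a generator matrix of the convolutional code `C ⊆ F[D]^ι`:
its rows are `F[D]`-linearly independent (full rank) and they span `C`. -/
def IsGenMat (C : Submodule (Polynomial F) (ι → Polynomial F))
    (G : Matrix (Fin k) ι (Polynomial F)) : Prop :=
  LinearIndependent (Polynomial F) (fun i => G i) ∧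
    C = Submodule.span (Polynomial F) (Set.range fun i => G i)

/-- Degree of the `i`-th row of `G` (the maximum of the degrees of its entries). -/
def rowDeg (G : Matrix (Fin k) ι (Polynomial F)) (i : Fin k) : ℕ :=
  Finset.univ.sup fun j => (G i j).natDegree

/-- `G` is a reduced generator matrix of `C`: the sum of its row degrees is
minimum among all generator matrices of `C`. -/
def IsRedGenMat (C : Submodule (Polynomial F) (ι → Polynomial F))
    (G : Matrix (Fin k) ι (Polynomial F)) : Prop :=
  IsGenMat C G ∧ ∀ G' : Matrix (Fin k) ι (Polynomial F), IsGenMat C G' →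
    ∑ i, rowDeg G i ≤ ∑ i, rowDeg G' i

/-- `G` is a basic generator matrix of `C`: it has a polynomial right inverse. -/
def IsBasicGenMat (C : Submodule (Polynomial F) (ι → Polynomial F))
    (G : Matrix (Fin k) ι (Polynomial F)) : Prop :=
  IsGenMat C G ∧ ∃ Fi : Matrix ι (Fin k) (Polynomial F), G * Fi = 1

/-- `C` is non-catastrophic: it admits a reduced and basic generator matrix. -/
def NonCatastrophic (C : Submodule (Polynomial F) (ι → Polynomial F)) (k : ℕ) : Prop :=
  ∃ G : Matrix (Fin k) ι (Polynomial F), IsRedGenMat C G ∧ IsBasicGenMat C G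

/-- `C` is a convolutional code of rank `k` (a free submodule of rank `k`,
equivalently it admits a `k`-row generator matrix). -/
def IsConvCode (C : Submodule (Polynomial F) (ι → Polynomial F)) (k : ℕ) : Prop :=
  ∃ G : Matrix (Fin k) ι (Polynomial F), IsGenMat C G

/-- `h`-th coefficient matrix `G_h` of a polynomial matrix `G(D) = Σ_h G_h D^h`. -/
def coeffMat (G : Matrix (Fin k) ι (Polynomial F)) (h : ℕ) : Matrix (Fin k) ι F :=
  fun i j => (G i j).coeff h

/-- `j`-th truncated sliding generator matrix `G_j^c`. -/
def slidingMat (G : Matrix (Fin k) ι (Polynomial F)) (j : ℕ) :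
    Matrix (Fin (j + 1) × Fin k) (Fin (j + 1) × ι) F :=
  fun a b => if (a.1 : ℕ) ≤ (b.1 : ℕ) then (G a.2 b.2).coeff ((b.1 : ℕ) - (a.1 : ℕ)) else 0

/-- `j`-th column block code `C_j^c`. -/
def colBlockCode (G : Matrix (Fin k) ι (Polynomial F)) (j : ℕ) :
    Set (Fin (j + 1) × ι → F) :=
  { v | ∃ u : Fin (j + 1) × Fin k → F, (fun i => u (0, i)) ≠ 0 ∧
      v = Matrix.vecMul u (slidingMat G j) }

/-- `j`-th column (Hamming) distance. -/
def colDist (G : Matrix (Fin k) ι (Polynomial F)) (j : ℕ) : ℕ :=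
  sInf (hWt '' colBlockCode G j)

/-- Restriction of a convolutional code to a subset `Δ` of its coordinates. -/
def restrictCode (C : Submodule (Polynomial F) (ι → Polynomial F)) (Δ : Finset ι) :
    Submodule (Polynomial F) ({x // x ∈ Δ} → Polynomial F) :=
  C.map (LinearMap.funLeft (Polynomial F) (Polynomial F) Subtype.val)

/-- Associated block code `C^0` of a convolutional code `C`
(the set of `j`-th coefficient vectors of codewords, for `j` large enough;
this union over all `j` equals `{v_μ : v(D) ∈ C}` for `μ` the memory of the code). -/
def assocBlockCode (C : Submodule (Polynomial F) (ι → Polynomial F)) : Set (ι → F) :=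
  { w | ∃ v ∈ C, ∃ j : ℕ, ∀ i, w i = (v i).coeff j }

/-- `C` is an `(n, k, r, ∂)` locally repairable convolutional code with local
groups `Γ 1, ..., Γ g` covering all coordinates. -/
def IsLRCC (C : Submodule (Polynomial F) (ι → Polynomial F)) (k r d : ℕ)
    {g : ℕ} (Γ : Fin g → Finset ι) : Prop :=
  IsConvCode C k ∧
  (∀ x : ι, ∃ a, x ∈ Γ a) ∧
  (∀ a, (Γ a).card ≤ r + d - 1) ∧
  (∀ a, ∀ w ∈ assocBlockCode (restrictCode C (Γ a)), w ≠ 0 → d ≤ hWt w)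

/-- `C` is `j`-MDS: non-catastrophic with `j`-th column distance `(n−k)(j+1)+1`. -/
def IsjMDS (C : Submodule (Polynomial F) (ι → Polynomial F)) (k j : ℕ) : Prop :=
  NonCatastrophic C k ∧
  ∀ G : Matrix (Fin k) ι (Polynomial F), IsRedGenMat C G →
    colDist G j = (Fintype.card ι - k) * (j + 1) + 1

/-- `C` is partial `j`-MDS with respect to local groups `Γ`. -/
def IsPartialjMDS [DecidableEq ι] (C : Submodule (Polynomial F) (ι → Polynomial F))
    (k r d : ℕ) {g : ℕ} (Γ : Fin g → Finset ι) (j : ℕ) : Prop :=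
  ∀ Δ : Fin g → Finset ι, (∀ a, Δ a ⊆ Γ a) → (∀ a, (Γ a \ Δ a).card = d - 1) →
    IsjMDS (restrictCode C (Finset.univ.biUnion Δ)) k j

section SumRank

variable (Fq : Type*) [Field Fq] {Fqm : Type*} [Field Fqm] [Algebra Fq Fqm]

/-- Sum-rank weight of `c ∈ F_{q^m}^{gr}` (with respect to a basis `B` of
`F_{q^m}` over `F_q`): the sum over the `g` blocks of the ranks of the
matrix representations of the blocks. -/
def srWt {m g r : ℕ} (B : Module.Basis (Fin m) Fq Fqm) (c : Fin g × Fin r → Fqm) : ℕ :=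
  ∑ a : Fin g, (Matrix.of fun (i : Fin m) (j : Fin r) => B.repr (c (a, j)) i).rank

/-- Sum-rank weight of a window vector in `F_{q^m}^{(j+1)gr}`. -/
def srWtVec {m g r : ℕ} (B : Module.Basis (Fin m) Fq Fqm) {j : ℕ}
    (v : Fin (j + 1) × (Fin g × Fin r) → Fqm) : ℕ :=
  ∑ h : Fin (j + 1), srWt Fq B fun p => v (h, p)

/-- `j`-th sum-rank column distance. -/
def srColDist {m g r k : ℕ} (B : Module.Basis (Fin m) Fq Fqm)
    (G : Matrix (Fin k) (Fin g × Fin r) (Polynomial Fqm)) (j : ℕ) : ℕ :=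
  sInf (srWtVec Fq B '' colBlockCode G j)

/-- `C` is `j`-MSRD. -/
def IsjMSRD {m g r : ℕ} (B : Module.Basis (Fin m) Fq Fqm)
    (C : Submodule (Polynomial Fqm) (Fin g × Fin r → Polynomial Fqm)) (k j : ℕ) : Prop :=
  NonCatastrophic C k ∧
  ∀ G : Matrix (Fin k) (Fin g × Fin r) (Polynomial Fqm), IsRedGenMat C G →
    srColDist Fq B G j = (g * r - k) * (j + 1) + 1

/-- The block-diagonal matrix `diag_g(A)`, with `g` diagonal copies of `A`,
viewed over the polynomial ring `F_{q^m}[D]`. -/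
def diagMap (g : ℕ) {r s : ℕ} (A : Matrix (Fin r) (Fin s) Fq) :
    Matrix (Fin g × Fin r) (Fin g × Fin s) (Polynomial Fqm) :=
  fun p q => if p.1 = q.1 then Polynomial.C (algebraMap Fq Fqm (A p.2 q.2)) else 0

/-- The global code of Construction 1: `C_glob = { v(D) diag_g(A) : v(D) ∈ C_out }`. -/
def globCode {g r s : ℕ}
    (Cout : Submodule (Polynomial Fqm) (Fin g × Fin r → Polynomial Fqm))
    (A : Matrix (Fin r) (Fin s) Fq) :
    Submodule (Polynomial Fqm) (Fin g × Fin s → Polynomial Fqm) :=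
  Cout.map (Matrix.vecMulLinear (diagMap (Fqm := Fqm) Fq g A))

end SumRank


private noncomputable def buildSeq {α : Type*} (f : (h : ℕ) → ((t : ℕ) → t < h → α) → α) :
    ℕ → α
  | h => f h fun t ht => buildSeq f t
termination_by h => h
decreasing_by exact ht

private theorem buildSeq_eq {α : Type*} (f : (h : ℕ) → ((t : ℕ) → t < h → α) → α) (h : ℕ) :
    buildSeq f h = f h fun t _ => buildSeq f t := by rw [buildSeq]

private theorem hWt_restrict_le {F : Type*} [Zero F] {n : ℕ} (y : Fin n → F)
    (s Δt : Finset (Fin n)) (h0 : ∀ x ∈ Δt, y x = 0) :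
    hWt (fun x : {x // x ∈ s} => y x.val) ≤ (s \ Δt).card := by
  classical
  have hinj : Function.Injective (fun z : {x : {x // x ∈ s} // y x.val ≠ 0} =>
      (⟨z.1.1, Finset.mem_sdiff.mpr ⟨z.1.2, fun hm => z.2 (h0 _ hm)⟩⟩ : {x // x ∈ s \ Δt})) := by
    intro z z' hzz
    simp only [Subtype.mk.injEq] at hzz
    exact Subtype.ext (Subtype.ext hzz)
  calc hWt (fun x : {x // x ∈ s} => y x.val) ≤ Nat.card {x // x ∈ s \ Δt} :=
        Nat.card_le_card_of_injective _ hinj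
    _ = (s \ Δt).card := by rw [Nat.card_eq_fintype_card, Fintype.card_coe]

private theorem hWt_eq_card_filter {α F : Type*} [Fintype α] [Zero F] (v : α → F)
    [DecidablePred fun a => v a ≠ 0] :
    hWt v = (Finset.univ.filter (fun a => v a ≠ 0)).card := by
  rw [hWt, Nat.card_eq_fintype_card, Fintype.card_subtype]

private theorem vecMul_mem_span {F : Type*} [Field F] {k n : ℕ}
    (G : Matrix (Fin k) (Fin n) (Polynomial F)) (p : Fin k → Polynomial F) :
    Matrix.vecMul p G ∈ Submodule.span (Polynomial F) (Set.range fun i => G i) := by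
  have hs : Matrix.vecMul p G = ∑ i, p i • G i := by
    ext x; simp [Matrix.vecMul, dotProduct, Finset.sum_apply]
  rw [hs]
  exact Submodule.sum_mem _ fun i _ => Submodule.smul_mem _ _ (Submodule.subset_span ⟨i, rfl⟩)


theorem statement1 {F : Type*} [Field F] [Fintype F]
    {n k r d g ℓ : ℕ} (hk : 0 < k) (hr : 0 < r) (hd : 0 < d) (hℓ : 0 < ℓ)
    (hkl : k = ℓ * r)
    (C : Submodule (Polynomial F) (Fin n → Polynomial F))
    (Γ : Fin g → Finset (Fin n)) (hC : IsLRCC C k r d Γ)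
    (hdisj : ∀ a b, a ≠ b → Disjoint (Γ a) (Γ b))
    (hfull : ∀ a, (Γ a).card = r + d - 1)
    (G : Matrix (Fin k) (Fin n) (Polynomial F)) (hG : IsRedGenMat C G)
    (hG0 : (coeffMat G 0).rank = k)
    (hinfo : ∃ e : Fin ℓ → Fin g, Function.Injective e ∧
      ∀ u : Fin k → F,
        (∀ x : Fin n, (∃ t, x ∈ Γ (e t)) → Matrix.vecMul u (coeffMat G 0) x = 0) →
        Matrix.vecMul u (coeffMat G 0) = 0) :
    ∀ j : ℕ, (colDist G j : ℤ) ≤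
      ((n : ℤ) - k) * (j + 1) - ((ℓ : ℤ) * (j + 1) - 1) * ((d : ℤ) - 1) + 1 := by
  classical
  obtain ⟨e, he, hinfo⟩ := hinfo
  obtain ⟨-, -, -, hloc⟩ := hC
  intro j
  -- triviality of the left kernel of G0
  have hker : ∀ u : Fin k → F, Matrix.vecMul u (coeffMat G 0) = 0 → u = 0 := by
    intro u hu
    set A := coeffMat G 0 with hA
    have hrk : Aᵀ.rank = k := by rw [Matrix.rank_transpose]; exact hG0
    have hrn := LinearMap.finrank_range_add_finrank_ker (Matrix.mulVecLin Aᵀ)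
    have hdom : Module.finrank F (Fin k → F) = k := by simp
    have h2 : Module.finrank F (LinearMap.range (Matrix.mulVecLin Aᵀ)) = k := hrk
    have hker0 : Module.finrank F (LinearMap.ker (Matrix.mulVecLin Aᵀ)) = 0 := by omega
    have hbot : LinearMap.ker (Matrix.mulVecLin Aᵀ) = ⊥ := Submodule.finrank_eq_zero.mp hker0
    have humem : u ∈ LinearMap.ker (Matrix.mulVecLin Aᵀ) := by
      rw [LinearMap.mem_ker]
      show Aᵀ.mulVec u = 0
      rw [Matrix.mulVec_transpose]; exact hu
    rw [hbot, Submodule.mem_bot] at humem; exact humem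
  -- choose r-subsets of the information local groups
  have hGe : ∀ t : Fin ℓ, r ≤ (Γ (e t)).card := fun t => by rw [hfull]; omega
  choose Δ' hΔsub hΔcard using fun t : Fin ℓ => Finset.exists_subset_card_eq (hGe t)
  set t0 : Fin ℓ := ⟨0, hℓ⟩ with ht0
  obtain ⟨xs, hxs⟩ : (Δ' t0).Nonempty := Finset.card_pos.mp (by rw [hΔcard]; exact hr)
  set ΔS : Finset (Fin n) := Finset.univ.biUnion Δ' with hΔS
  have hdisj' : ∀ t t' : Fin ℓ, t ≠ t' → Disjoint (Γ (e t)) (Γ (e t')) :=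
    fun t t' h => hdisj _ _ (fun hh => h (he hh))
  have hΔdisj : ∀ t ∈ (Finset.univ : Finset (Fin ℓ)), ∀ t' ∈ (Finset.univ : Finset (Fin ℓ)),
      t ≠ t' → Disjoint (Δ' t) (Δ' t') := by
    intro t _ t' _ h
    exact Finset.disjoint_of_subset_left (hΔsub t)
      (Finset.disjoint_of_subset_right (hΔsub t') (hdisj' t t' h))
  have hΔScard : ΔS.card = k := by
    rw [hΔS, Finset.card_biUnion hΔdisj]
    simp only [hΔcard, Finset.sum_const, Finset.card_univ, Fintype.card_fin, smul_eq_mul]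
    omega
  have hΔSsub : ∀ t, Δ' t ⊆ ΔS := fun t => Finset.subset_biUnion_of_mem Δ' (Finset.mem_univ t)
  -- coefficient formula for codewords with polynomial inputs of the standard shape
  have hcoeff : ∀ (q : ℕ → Fin k → F) (N h : ℕ), h < N → ∀ x : Fin n,
      ((Matrix.vecMul (fun i => ∑ τ ∈ Finset.range N,
          Polynomial.C (q τ i) * Polynomial.X ^ τ) G) x).coeff h
        = ∑ τ ∈ Finset.range (h+1), Matrix.vecMul (q τ) (coeffMat G (h - τ)) x := by
    intro q N h hN x
    have hv1 : ∀ (p : Fin k → Polynomial F), (Matrix.vecMul p G) x = ∑ i, p i * G i x := by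
      intro p; simp [Matrix.vecMul, dotProduct]
    rw [hv1, Polynomial.finset_sum_coeff]
    have hterm : ∀ i : Fin k,
        ((∑ τ ∈ Finset.range N, Polynomial.C (q τ i) * Polynomial.X ^ τ) * G i x).coeff h
          = ∑ τ ∈ Finset.range N, if τ ≤ h then q τ i * (G i x).coeff (h - τ) else 0 := by
      intro i
      rw [Finset.sum_mul, Polynomial.finset_sum_coeff]
      refine Finset.sum_congr rfl fun τ _ => ?_
      rw [mul_right_comm, Polynomial.coeff_mul_X_pow', Polynomial.coeff_C_mul]
    simp_rw [hterm]
    rw [Finset.sum_comm]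
    have hvan : ∀ τ ∈ Finset.range N, τ ∉ Finset.range (h+1) →
        (∑ i, if τ ≤ h then q τ i * (G i x).coeff (h - τ) else 0) = 0 := by
      intro τ _ hτ
      refine Finset.sum_eq_zero fun i _ => if_neg ?_
      simp only [Finset.mem_range] at hτ; omega
    rw [← Finset.sum_subset (Finset.range_subset_range.mpr hN) hvan]
    refine Finset.sum_congr rfl fun τ hτ => ?_
    have hτh : τ ≤ h := Nat.lt_succ_iff.mp (Finset.mem_range.mp hτ)
    simp [hτh, Matrix.vecMul, dotProduct, coeffMat]
  -- membership of vecMul's in C and of their coefficient restrictions in the block codes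
  have hmemC : ∀ p : Fin k → Polynomial F, Matrix.vecMul p G ∈ C := by
    intro p; rw [hG.1.2]; exact vecMul_mem_span G p
  have hrestr : ∀ (p : Fin k → Polynomial F) (h : ℕ) (a : Fin g),
      (fun x : {x // x ∈ Γ a} => ((Matrix.vecMul p G) x.val).coeff h) ∈
        assocBlockCode (restrictCode C (Γ a)) := by
    intro p h a
    exact ⟨fun x : {x // x ∈ Γ a} => (Matrix.vecMul p G) x.val,
      ⟨Matrix.vecMul p G, hmemC p, rfl⟩, h, fun i => rfl⟩
  -- zero propagation by locality
  have hprop : ∀ (p : Fin k → Polynomial F) (h : ℕ) (t : Fin ℓ),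
      (∀ x ∈ Δ' t, ((Matrix.vecMul p G) x).coeff h = 0) →
      ∀ x ∈ Γ (e t), ((Matrix.vecMul p G) x).coeff h = 0 := by
    intro p h t h0 x hx
    by_contra hne
    have hwne : (fun x : {x // x ∈ Γ (e t)} => ((Matrix.vecMul p G) x.val).coeff h) ≠ 0 := by
      intro hcon
      exact hne (congrFun hcon ⟨x, hx⟩)
    have hdle := hloc (e t) _ (hrestr p h (e t)) hwne
    have hle : hWt (fun x : {x // x ∈ Γ (e t)} => ((Matrix.vecMul p G) x.val).coeff h)
        ≤ (Γ (e t) \ Δ' t).card :=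
      hWt_restrict_le (fun x => ((Matrix.vecMul p G) x).coeff h) (Γ (e t)) (Δ' t) h0
    rw [Finset.card_sdiff_of_subset (hΔsub t), hfull, hΔcard] at hle
    omega
  -- vanishing on ΔS forces zero
  have hkey : ∀ w : Fin k → F, (∀ x ∈ ΔS, Matrix.vecMul w (coeffMat G 0) x = 0) → w = 0 := by
    intro w hw
    apply hker
    apply hinfo
    rintro x ⟨t, hxt⟩
    have hc : ∀ x : Fin n, ((Matrix.vecMul (fun i => Polynomial.C (w i)) G) x).coeff 0
        = Matrix.vecMul w (coeffMat G 0) x := by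
      intro x
      simp [Matrix.vecMul, dotProduct, Polynomial.finset_sum_coeff,
        Polynomial.coeff_C_mul, coeffMat]
    have := hprop (fun i => Polynomial.C (w i)) 0 t
      (fun x' hx' => by rw [hc]; exact hw x' (hΔSsub t hx')) x hxt
    rw [← hc x]; exact this
  -- the evaluation map on ΔS is bijective
  set φ : (Fin k → F) → ({x // x ∈ ΔS} → F) :=
    fun w x => Matrix.vecMul w (coeffMat G 0) x.val with hφ
  have hφinj : Function.Injective φ := by
    intro w w' hww
    have h0 : ∀ x ∈ ΔS, Matrix.vecMul (w - w') (coeffMat G 0) x = 0 := by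
      intro x hx
      have h1 : Matrix.vecMul w (coeffMat G 0) x = Matrix.vecMul w' (coeffMat G 0) x :=
        congrFun hww ⟨x, hx⟩
      rw [Matrix.sub_vecMul, Pi.sub_apply, h1, sub_self]
    have := hkey _ h0
    rwa [sub_eq_zero] at this
  have hcardeq : Fintype.card (Fin k → F) = Fintype.card ({x // x ∈ ΔS} → F) := by
    rw [Fintype.card_fun, Fintype.card_fun, Fintype.card_coe, hΔScard, Fintype.card_fin]
  have hφbij : Function.Bijective φ :=
    (Fintype.bijective_iff_injective_and_card φ).mpr ⟨hφinj, hcardeq⟩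
  set E := Equiv.ofBijective φ hφbij with hE
  -- the recursively defined input sequence
  set step : (h : ℕ) → ((t : ℕ) → t < h → (Fin k → F)) → (Fin k → F) := fun h prev =>
    if h = 0 then E.symm (fun x => if x.val = xs then 1 else 0)
    else E.symm (fun x => - ∑ τ ∈ (Finset.range h).attach,
      Matrix.vecMul (prev τ.1 (Finset.mem_range.mp τ.2)) (coeffMat G (h - τ.1)) x.val)
    with hstep
  set u : ℕ → Fin k → F := buildSeq step with hudef
  have hu : ∀ h, u h = step h (fun t _ => u t) := fun h => buildSeq_eq step h
  have hφu0 : φ (u 0) = fun x : {x // x ∈ ΔS} => if x.val = xs then (1:F) else 0 := by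
    rw [hu 0]
    simp only [hstep, if_pos rfl]
    exact E.apply_symm_apply _
  -- values of partial sums on ΔS
  have hval : ∀ (h : ℕ) (x : Fin n), x ∈ ΔS →
      (∑ τ ∈ Finset.range (h+1), Matrix.vecMul (u τ) (coeffMat G (h - τ)) x)
        = if h = 0 ∧ x = xs then 1 else 0 := by
    intro h x hx
    rw [Finset.sum_range_succ, Nat.sub_self]
    cases h with
    | zero =>
      rw [Finset.range_zero, Finset.sum_empty, zero_add]
      have h1 : Matrix.vecMul (u 0) (coeffMat G 0) x = φ (u 0) ⟨x, hx⟩ := rfl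
      rw [h1, hφu0]
      by_cases hxxs : x = xs <;> simp [hxxs]
    | succ m =>
      have h2 : φ (u (m+1)) = fun x : {x // x ∈ ΔS} =>
          - ∑ τ ∈ (Finset.range (m+1)).attach,
            Matrix.vecMul (u τ.1) (coeffMat G (m+1 - τ.1)) x.val := by
        rw [hu (m+1)]
        simp only [hstep, if_neg (Nat.succ_ne_zero m)]
        exact E.apply_symm_apply _
      have h1 : Matrix.vecMul (u (m+1)) (coeffMat G 0) x = φ (u (m+1)) ⟨x, hx⟩ := rfl
      rw [h1, h2]
      have h3 : (∑ τ ∈ (Finset.range (m+1)).attach,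
          Matrix.vecMul (u τ.1) (coeffMat G (m+1 - τ.1)) x)
          = ∑ τ ∈ Finset.range (m+1), Matrix.vecMul (u τ) (coeffMat G (m+1 - τ)) x :=
        Finset.sum_attach (Finset.range (m+1))
          (fun τ => Matrix.vecMul (u τ) (coeffMat G (m+1 - τ)) x)
      simp only []
      rw [h3]
      simp
  -- the window codeword
  set uPoly : Fin k → Polynomial F :=
    fun i => ∑ τ ∈ Finset.range (j+1), Polynomial.C (u τ i) * Polynomial.X ^ τ with huPoly
  have hWcoeff : ∀ h : ℕ, h < j + 1 → ∀ x,
      ((Matrix.vecMul uPoly G) x).coeff h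
        = ∑ τ ∈ Finset.range (h+1), Matrix.vecMul (u τ) (coeffMat G (h - τ)) x := by
    intro h hh x
    rw [huPoly]
    exact hcoeff u (j+1) h hh x
  set U : Fin (j+1) × Fin k → F := fun p => u p.1 p.2 with hU
  set v : Fin (j+1) × Fin n → F := Matrix.vecMul U (slidingMat G j) with hv
  have hwin : ∀ (a : Fin (j+1)) (x : Fin n), v (a, x) = ((Matrix.vecMul uPoly G) x).coeff a := by
    intro a x
    rw [hv]
    have h1 : Matrix.vecMul U (slidingMat G j) (a, x)
        = ∑ p : Fin (j+1) × Fin k, U p * slidingMat G j p (a, x) := by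
      simp [Matrix.vecMul, dotProduct]
    rw [h1, Fintype.sum_prod_type, hWcoeff a a.isLt x]
    have h2 : ∀ t : Fin (j+1), (∑ i, U (t, i) * slidingMat G j (t, i) (a, x))
        = if (t:ℕ) ≤ (a:ℕ) then Matrix.vecMul (u (t:ℕ)) (coeffMat G ((a:ℕ) - (t:ℕ))) x else 0 := by
      intro t
      by_cases hta : (t:ℕ) ≤ (a:ℕ)
      · rw [if_pos hta]
        simp [slidingMat, hta, Matrix.vecMul, dotProduct, coeffMat, hU]
      · rw [if_neg hta]
        refine Finset.sum_eq_zero fun i _ => ?_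
        simp [slidingMat, hta]
    simp_rw [h2]
    rw [Fin.sum_univ_eq_sum_range
      (fun τ => if τ ≤ (a:ℕ) then Matrix.vecMul (u τ) (coeffMat G ((a:ℕ) - τ)) x else 0) (j+1)]
    have hvan2 : ∀ τ ∈ Finset.range (j+1), τ ∉ Finset.range ((a:ℕ)+1) →
        (if τ ≤ (a:ℕ) then Matrix.vecMul (u τ) (coeffMat G ((a:ℕ) - τ)) x else 0) = 0 := by
      intro τ _ hτ
      refine if_neg ?_
      simp only [Finset.mem_range] at hτ; omega
    rw [← Finset.sum_subset (Finset.range_subset_range.mpr a.isLt) hvan2]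
    exact Finset.sum_congr rfl fun τ hτ => if_pos (Nat.lt_succ_iff.mp (Finset.mem_range.mp hτ))
  -- nonzero first block
  have hU0 : (fun i => U (0, i)) ≠ 0 := by
    intro hcon
    have hu0 : u 0 = 0 := by
      funext i
      have := congrFun hcon i
      simpa [hU] using this
    have h1 : φ (u 0) ⟨xs, hΔSsub t0 hxs⟩ = 0 := by
      rw [hu0, hφ]
      simp [Matrix.zero_vecMul]
    rw [hφu0] at h1
    simp at h1
  have hcd : colDist G j ≤ hWt v := Nat.sInf_le ⟨v, ⟨U, hU0, hv⟩, rfl⟩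
  -- the zero pattern
  have hzero : ∀ (a : Fin (j+1)) (t : Fin ℓ), ¬((a : ℕ) = 0 ∧ t = t0) →
      ∀ x ∈ Γ (e t), v (a, x) = 0 := by
    intro a t hne x hx
    rw [hwin]
    refine hprop uPoly (a:ℕ) t ?_ x hx
    intro x' hx'
    rw [hWcoeff (a:ℕ) a.isLt x', hval (a:ℕ) x' (hΔSsub t hx')]
    refine if_neg ?_
    rintro ⟨ha0, rfl⟩
    have ht : t ≠ t0 := fun h => hne ⟨ha0, h⟩
    exact Finset.disjoint_left.mp (hΔdisj t (Finset.mem_univ t) t0 (Finset.mem_univ t0) ht) hx' hxs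
  -- the zero set
  set p0 : Fin (j+1) × Fin ℓ := (0, t0) with hp0
  set S : Fin (j+1) × Fin ℓ → Finset (Fin (j+1) × Fin n) := fun p =>
    {p.1} ×ˢ (if p = p0 then Δ' t0 \ {xs} else Γ (e p.2)) with hS
  have hSsub : ∀ p, ∀ q ∈ S p, q.1 = p.1 ∧ q.2 ∈ Γ (e p.2) := by
    intro p q hq
    rw [hS] at hq
    simp only [Finset.mem_product, Finset.mem_singleton] at hq
    refine ⟨hq.1, ?_⟩
    by_cases hp : p = p0
    · rw [if_pos hp] at hq
      subst hp
      exact hΔsub t0 (Finset.mem_sdiff.mp hq.2).1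
    · rw [if_neg hp] at hq
      exact hq.2
  have hSdisj : ∀ p ∈ (Finset.univ : Finset (Fin (j+1) × Fin ℓ)),
      ∀ p' ∈ (Finset.univ : Finset (Fin (j+1) × Fin ℓ)), p ≠ p' → Disjoint (S p) (S p') := by
    intro p _ p' _ hpp
    rw [Finset.disjoint_left]
    intro q hq hq'
    obtain ⟨h1, h2⟩ := hSsub p q hq
    obtain ⟨h1', h2'⟩ := hSsub p' q hq'
    have hsnd : p.2 = p'.2 := by
      by_contra hne
      exact Finset.disjoint_left.mp (hdisj' _ _ hne) h2 h2'
    exact hpp (Prod.ext (h1.symm.trans h1') hsnd)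
  set Z : Finset (Fin (j+1) × Fin n) := Finset.univ.biUnion S with hZ
  have hvZ : ∀ q ∈ Z, v q = 0 := by
    rintro ⟨a, x⟩ hq
    rw [hZ, Finset.mem_biUnion] at hq
    obtain ⟨p, -, hp⟩ := hq
    rw [hS] at hp
    simp only [Finset.mem_product, Finset.mem_singleton] at hp
    by_cases hpp0 : p = p0
    · rw [if_pos hpp0] at hp
      obtain ⟨hx1, hx2⟩ := Finset.mem_sdiff.mp hp.2
      rw [hwin, hWcoeff (a:ℕ) a.isLt x, hval (a:ℕ) x (hΔSsub t0 hx1)]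
      refine if_neg ?_
      rintro ⟨-, rfl⟩
      exact hx2 (Finset.mem_singleton.mpr rfl)
    · rw [if_neg hpp0] at hp
      refine hzero a p.2 ?_ x hp.2
      rintro ⟨ha0, ht⟩
      refine hpp0 ?_
      rw [hp0]
      refine Prod.ext ?_ ht
      rw [← hp.1]
      exact Fin.ext ha0
  have hZcard : Z.card = ((j+1) * ℓ - 1) * (r + d - 1) + (r - 1) := by
    rw [hZ, Finset.card_biUnion hSdisj]
    rw [Finset.sum_eq_sum_sdiff_singleton_add (Finset.mem_univ p0)]
    have h1 : (S p0).card = r - 1 := by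
      rw [hS]
      show ({p0.1} ×ˢ (if p0 = p0 then Δ' t0 \ {xs} else Γ (e p0.2))).card = r - 1
      rw [if_pos rfl]
      rw [Finset.card_product, Finset.card_singleton, one_mul,
        Finset.card_sdiff_of_subset (Finset.singleton_subset_iff.mpr hxs), hΔcard, Finset.card_singleton]
    have h2 : ∀ p ∈ Finset.univ \ {p0}, (S p).card = r + d - 1 := by
      intro p hp
      rw [Finset.mem_sdiff, Finset.mem_singleton] at hp
      rw [hS]
      simp only [if_neg hp.2]
      rw [Finset.card_product, Finset.card_singleton, one_mul, hfull]
    rw [Finset.sum_congr rfl h2, Finset.sum_const, smul_eq_mul,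
      Finset.card_sdiff_of_subset (Finset.singleton_subset_iff.mpr (Finset.mem_univ p0)),
      Finset.card_singleton, Finset.card_univ, Fintype.card_prod,
      Fintype.card_fin, Fintype.card_fin, h1]
  -- counting
  have hcount : hWt v + Z.card ≤ (j+1) * n := by
    rw [hWt_eq_card_filter]
    have hdisjZ : Disjoint (Finset.univ.filter (fun q => v q ≠ 0)) Z := by
      rw [Finset.disjoint_left]
      intro q hq hqZ
      exact (Finset.mem_filter.mp hq).2 (hvZ q hqZ)
    calc (Finset.univ.filter (fun q => v q ≠ 0)).card + Z.card
        = ((Finset.univ.filter (fun q => v q ≠ 0)) ∪ Z).card :=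
          (Finset.card_union_of_disjoint hdisjZ).symm
      _ ≤ Fintype.card (Fin (j+1) × Fin n) := by
          rw [← Finset.card_univ]; exact Finset.card_le_card (Finset.subset_univ _)
      _ = (j+1) * n := by simp
  -- final arithmetic
  have hm1 : 1 ≤ (j+1) * ℓ := Nat.one_le_iff_ne_zero.mpr (by positivity)
  have hrd1 : 1 ≤ r + d := by omega
  have hZcardZ : (Z.card : ℤ) = (((j:ℤ)+1) * ℓ - 1) * ((r:ℤ) + d - 1) + ((r:ℤ) - 1) := by
    rw [hZcard]
    push_cast [Nat.cast_sub hm1, Nat.cast_sub hrd1, Nat.cast_sub hr]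
    ring
  have hkZ : (k : ℤ) = (ℓ : ℤ) * r := by exact_mod_cast hkl
  have hfin : ((j:ℤ)+1) * n - Z.card
      = ((n:ℤ) - k) * ((j:ℤ) + 1) - ((ℓ:ℤ) * ((j:ℤ) + 1) - 1) * ((d:ℤ) - 1) + 1 := by
    rw [hZcardZ, hkZ]
    ring
  have h1 : (colDist G j : ℤ) ≤ (hWt v : ℤ) := by exact_mod_cast hcd
  have h2 : (hWt v : ℤ) + (Z.card : ℤ) ≤ (((j:ℕ)+1) * n : ℕ) := by exact_mod_cast hcount
  have h3 : ((((j:ℕ)+1) * n : ℕ) : ℤ) = ((j:ℤ)+1) * n := by push_cast; ring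
  rw [h3] at h2
  linarith [h1, h2, hfin]

end LRCC
end
end

section
/- Let F be a finite field and C ⊆ F[D]^n a non-catastrophic (n,k) convolutional code with k ≤ n. Then there exists a full-rank matrix H(D) ∈ F[D]^{(n−k)×n} such that C = {v(D) ∈ F[D]^n : v(D)H(D)^T = 0}. -/
open Polynomial Matrix Finset

noncomputable section

namespace LRCC

variable {F : Type*} [Field F] {ι : Type*} [Fintype ι] {k : ℕ}

theorem statement2aux {F : Type*} [Field F] [Fintype F] {n k : ℕ} (hk : k ≤ n)
    (C : Submodule (Polynomial F) (Fin n → Polynomial F))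
    (hnc : ∃ G : Matrix (Fin k) (Fin n) (Polynomial F),
      (LinearIndependent (Polynomial F) (fun i => G i) ∧
        C = Submodule.span (Polynomial F) (Set.range fun i => G i)) ∧
      ∃ Fi : Matrix (Fin n) (Fin k) (Polynomial F), G * Fi = 1) :
    ∃ H : Matrix (Fin (n - k)) (Fin n) (Polynomial F),
      LinearIndependent (Polynomial F) (fun a => H a) ∧
      ∀ v : Fin n → Polynomial F, v ∈ C ↔ Matrix.vecMul v Hᵀ = 0 := by
  classical
  obtain ⟨G, ⟨hindep, hspan⟩, Fi, hGFi⟩ := hnc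
  set M : Matrix (Fin n) (Fin n) (Polynomial F) := 1 - Fi * G with hM
  have hmemC : ∀ v, v ∈ C ↔ ∃ u, Matrix.vecMul u G = v := by
    intro v
    rw [hspan]
    change v ∈ Submodule.span _ (Set.range G.row) ↔ _
    rw [← range_vecMulLinear]
    exact Iff.rfl
  have hkerM : ∀ v, v ∈ C ↔ Matrix.vecMul v M = 0 := by
    intro v
    rw [hmemC]
    constructor
    · rintro ⟨u, rfl⟩
      rw [Matrix.vecMul_vecMul, hM, Matrix.mul_sub, Matrix.mul_one, ← Matrix.mul_assoc,
        hGFi, Matrix.one_mul, sub_self, Matrix.vecMul_zero]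
    · intro h
      refine ⟨Matrix.vecMul v Fi, ?_⟩
      rw [hM, Matrix.vecMul_sub, Matrix.vecMul_one, sub_eq_zero] at h
      rw [Matrix.vecMul_vecMul]
      exact h.symm
  set p := Matrix.mulVecLin M with hp
  set N := LinearMap.range p with hN
  -- kernel of p has rank k
  have hkerp : LinearMap.ker p = LinearMap.range (Matrix.mulVecLin Fi) := by
    ext x
    simp only [LinearMap.mem_ker, LinearMap.mem_range, hp, Matrix.mulVecLin_apply]
    constructor
    · intro h
      refine ⟨Matrix.mulVec G x, ?_⟩
      rw [hM, Matrix.sub_mulVec, Matrix.one_mulVec, sub_eq_zero] at h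
      rw [Matrix.mulVec_mulVec]; exact h.symm
    · rintro ⟨y, rfl⟩
      rw [hM, Matrix.sub_mulVec, Matrix.one_mulVec, Matrix.mulVec_mulVec, Matrix.mul_assoc,
        hGFi, Matrix.mul_one, sub_self]
  have hFiInj : Function.Injective (Matrix.mulVecLin Fi) := by
    intro x y hxy
    have : Matrix.mulVec G (Matrix.mulVec Fi x) = Matrix.mulVec G (Matrix.mulVec Fi y) := by
      simpa [Matrix.mulVecLin_apply] using congrArg (Matrix.mulVec G) hxy
    simpa [Matrix.mulVec_mulVec, hGFi, Matrix.one_mulVec] using this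
  have hrank_ker : Module.rank (Polynomial F) (LinearMap.ker p) = k := by
    rw [hkerp, ← (LinearEquiv.ofInjective _ hFiInj).rank_eq, rank_fin_fun]
  have hrksum : Module.rank (Polynomial F) N + Module.rank (Polynomial F) (LinearMap.ker p)
      = (n : Cardinal) := by
    rw [LinearMap.rank_range_add_rank_ker p, rank_fin_fun]
  -- basis of N
  obtain ⟨m, bN⟩ := Submodule.basisOfPid (Pi.basisFun (Polynomial F) (Fin n)) N
  have hrank_N : Module.rank (Polynomial F) N = m := (rank_eq_card_basis bN).trans (by simp)
  have hm : m = n - k := by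
    rw [hrank_N, hrank_ker] at hrksum
    have : ((m + k : ℕ) : Cardinal) = (n : Cardinal) := by push_cast; exact hrksum
    have := Nat.cast_injective this
    omega
  subst hm
  -- the parity check matrix
  refine ⟨Matrix.of fun a j => (bN a : Fin n → Polynomial F) j, ?_, ?_⟩
  · exact bN.linearIndependent.map' N.subtype N.ker_subtype
  · intro v
    -- vecMul v M = 0 ↔ v ⬝ᵥ x = 0 for all x ∈ N
    have hforall : Matrix.vecMul v M = 0 ↔ ∀ x ∈ N, dotProduct v x = 0 := by
      constructor
      · intro h x hx
        obtain ⟨y, rfl⟩ := hx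
        rw [hp, Matrix.mulVecLin_apply, Matrix.dotProduct_mulVec, h, zero_dotProduct]
      · intro h
        funext j
        have hx : Matrix.mulVec M (Pi.single j 1) ∈ N := ⟨Pi.single j 1, rfl⟩
        have := h _ hx
        rw [Matrix.dotProduct_mulVec, dotProduct_single, mul_one] at this
        simpa using this
    have hNspan : N = Submodule.span (Polynomial F)
        (Set.range fun a => (bN a : Fin n → Polynomial F)) := by
      conv_lhs => rw [← Submodule.map_subtype_top N, ← bN.span_eq, Submodule.map_span]
      rw [← Set.range_comp]
      rfl
    rw [hkerM v, hforall, Matrix.vecMul_transpose]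
    constructor
    · intro h
      funext a
      have := h _ (bN a).2
      simpa [Matrix.mulVec, dotProduct_comm] using this
    · intro h x hx
      rw [hNspan] at hx
      induction hx using Submodule.span_induction with
      | mem x hxmem =>
        obtain ⟨a, rfl⟩ := hxmem
        have := congrFun h a
        simpa [Matrix.mulVec, dotProduct_comm] using this
      | zero => simp
      | add x y _ _ hx hy => rw [dotProduct_add, hx, hy, add_zero]
      | smul c x _ hx => rw [dotProduct_smul, hx, smul_zero]

theorem statement2 {F : Type*} [Field F] [Fintype F] {n k : ℕ} (hk : k ≤ n)
    (C : Submodule (Polynomial F) (Fin n → Polynomial F))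
    (hnc : NonCatastrophic C k) :
    ∃ H : Matrix (Fin (n - k)) (Fin n) (Polynomial F),
      LinearIndependent (Polynomial F) (fun a => H a) ∧
      ∀ v : Fin n → Polynomial F, v ∈ C ↔ Matrix.vecMul v Hᵀ = 0 := by
  obtain ⟨G, _, ⟨hindep, hspan⟩, Fi, hGFi⟩ := hnc
  exact statement2aux hk C ⟨G, ⟨hindep, hspan⟩, Fi, hGFi⟩


end LRCC
end
end

section
/- Let q be a prime power, m, g, r positive integers, N = gr, and let C ⊆ F_{q^m}[D]^N be a non-catastrophic (N,k) convolutional code of degree δ with 1 ≤ k < N. Then for all j ∈ ℕ, the j-th sum-rank column distance satisfies d_{SR,j}^c(C) ≤ (N−k)(j+1) + 1. Moreover: (1) if d_{SR,j+1}^c(C) = (N−k)(j+2) + 1, then d_{SR,j}^c(C) = (N−k)(j+1) + 1; and (2) if d_{SR,j}^c(C) = (N−k)(j+1) + 1, then j ≤ ⌊δ/k⌋ + ⌊δ/(N−k)⌋. -/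
open Polynomial Matrix Finset

noncomputable section

namespace LRCC

variable {F : Type*} [Field F] {ι : Type*} [Fintype ι] {k : ℕ}

/-! ### Auxiliary lemmas -/

/-- strong recursion helper -/
noncomputable def natRec {β : Type*} (step : ∀ n : ℕ, (Fin n → β) → β) : ℕ → β
  | n => step n (fun a => natRec step a.1)
  termination_by n => n
  decreasing_by exact a.2

theorem natRec_eq {β : Type*} (step : ∀ n : ℕ, (Fin n → β) → β) (n : ℕ) :
    natRec step n = step n (fun a => natRec step a.1) := by
  rw [natRec]

theorem rank_le_of_cols {K : Type*} [Field K] {m r : ℕ} (A : Matrix (Fin m) (Fin r) K)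
    (t : Finset (Fin r)) (h : ∀ j ∉ t, ∀ i, A i j = 0) : A.rank ≤ t.card := by
  classical
  have hsub : LinearMap.range A.mulVecLin ≤
      Submodule.span K ((t.image fun j => Aᵀ j : Finset _) : Set (Fin m → K)) := by
    rintro y ⟨x, rfl⟩
    have hx : A.mulVecLin x = ∑ j ∈ t, x j • Aᵀ j := by
      rw [Matrix.mulVecLin_apply]
      have h1 : A.mulVec x = ∑ j, x j • Aᵀ j := by
        funext i; simp [Matrix.mulVec, dotProduct, Finset.sum_apply, mul_comm]
      rw [h1]
      refine (Finset.sum_subset t.subset_univ ?_).symm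
      intro j _ hj
      have : Aᵀ j = 0 := funext fun i => h j hj i
      rw [this, smul_zero]
    rw [hx]
    exact Submodule.sum_mem _ fun j hj => Submodule.smul_mem _ _
      (Submodule.subset_span (Finset.mem_coe.2 (Finset.mem_image_of_mem _ hj)))
  calc A.rank = Module.finrank K (LinearMap.range A.mulVecLin) := rfl
    _ ≤ Module.finrank K (Submodule.span K
          ((t.image fun j => Aᵀ j : Finset _) : Set (Fin m → K))) :=
        Submodule.finrank_mono hsub
    _ ≤ (t.image fun j => Aᵀ j).card := finrank_span_finset_le_card _
    _ ≤ t.card := Finset.card_image_le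

theorem srWt_le {Fq : Type*} [Field Fq] {Fqm : Type*} [Field Fqm] [Algebra Fq Fqm]
    {m g r : ℕ} (B : Module.Basis (Fin m) Fq Fqm) (c : Fin g × Fin r → Fqm)
    (s : Finset (Fin g × Fin r)) (h : ∀ p, c p ≠ 0 → p ∈ s) :
    srWt Fq B c ≤ s.card := by
  classical
  calc srWt Fq B c
      ≤ ∑ a : Fin g, ((s.filter fun p => p.1 = a).image Prod.snd).card := by
        refine Finset.sum_le_sum fun a _ => ?_
        refine rank_le_of_cols _ _ fun j hj i => ?_
        have hc : c (a, j) = 0 := by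
          by_contra hc
          have hm : (a, j) ∈ s.filter fun p => p.1 = a := Finset.mem_filter.2 ⟨h _ hc, rfl⟩
          exact hj (Finset.mem_image_of_mem Prod.snd hm)
        simp [hc]
    _ ≤ ∑ a : Fin g, ((s.filter fun p => p.1 = a)).card :=
        Finset.sum_le_sum fun a _ => Finset.card_image_le
    _ = s.card := (Finset.card_eq_sum_card_fiberwise fun x _ => Finset.mem_univ x.1).symm

theorem srWtVec_le {Fq : Type*} [Field Fq] {Fqm : Type*} [Field Fqm] [Algebra Fq Fqm]
    {m g r : ℕ} (B : Module.Basis (Fin m) Fq Fqm) {j : ℕ}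
    (v : Fin (j + 1) × (Fin g × Fin r) → Fqm)
    (s : Finset (Fin (j + 1) × (Fin g × Fin r))) (h : ∀ q, v q ≠ 0 → q ∈ s) :
    srWtVec Fq B v ≤ s.card := by
  classical
  calc srWtVec Fq B v
      ≤ ∑ h' : Fin (j+1), ((s.filter fun q => q.1 = h').image Prod.snd).card := by
        refine Finset.sum_le_sum fun h' _ => ?_
        refine srWt_le B _ _ fun p hp => ?_
        have hm : (h', p) ∈ s.filter fun q => q.1 = h' := Finset.mem_filter.2 ⟨h _ hp, rfl⟩
        exact Finset.mem_image_of_mem Prod.snd hm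
    _ ≤ ∑ h' : Fin (j+1), ((s.filter fun q => q.1 = h')).card :=
        Finset.sum_le_sum fun a _ => Finset.card_image_le
    _ = s.card := (Finset.card_eq_sum_card_fiberwise fun x _ => Finset.mem_univ x.1).symm

theorem srWtVec_succ (Fq : Type*) [Field Fq] {Fqm : Type*} [Field Fqm] [Algebra Fq Fqm]
    {m g r : ℕ} (B : Module.Basis (Fin m) Fq Fqm) {j : ℕ}
    (v : Fin ((j + 1) + 1) × (Fin g × Fin r) → Fqm) :
    srWtVec Fq B v
      = srWtVec Fq B (fun q : Fin (j+1) × (Fin g × Fin r) => v (q.1.castSucc, q.2))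
        + srWt Fq B (fun p => v (Fin.last (j+1), p)) := by
  show (∑ h : Fin ((j+1)+1), srWt Fq B fun p => v (h, p)) = _
  rw [Fin.sum_univ_castSucc]
  rfl

omit [Fintype ι] in
theorem vecMul_coeffMat (G : Matrix (Fin k) ι (Polynomial F)) (h : ℕ) (x : Fin k → F) (p : ι) :
    Matrix.vecMul x (coeffMat G h) p = ∑ i, x i * (G i p).coeff h := rfl

omit [Fintype ι] in
theorem vecMul_sliding (G : Matrix (Fin k) ι (Polynomial F)) {j : ℕ} (uN : ℕ → Fin k → F)
    (h : Fin (j + 1)) (p : ι) :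
    Matrix.vecMul (fun q => uN q.1.1 q.2) (slidingMat G j) (h, p) =
      ∑ n ∈ Finset.range (h.1 + 1), Matrix.vecMul (uN n) (coeffMat G (h.1 - n)) p := by
  have hle : h.1 + 1 ≤ j + 1 := h.2
  have L1 : Matrix.vecMul (fun q => uN q.1.1 q.2) (slidingMat G j) (h, p)
      = ∑ a : Fin (j+1), ∑ i : Fin k, uN a.1 i * slidingMat G j (a, i) (h, p) := by
    simp [Matrix.vecMul, dotProduct, Fintype.sum_prod_type]
  rw [L1]
  have L2 : ∀ a : Fin (j+1), ∑ i : Fin k, uN a.1 i * slidingMat G j (a, i) (h, p)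
      = if (a.1 : ℕ) ≤ (h.1 : ℕ) then ∑ i, uN a.1 i * (G i p).coeff (h.1 - a.1) else 0 := by
    intro a
    by_cases hc : (a.1 : ℕ) ≤ (h.1 : ℕ) <;> simp [slidingMat, hc]
  simp only [L2]
  rw [Fin.sum_univ_eq_sum_range
    (fun n => if n ≤ (h.1:ℕ) then ∑ i, uN n i * (G i p).coeff (h.1 - n) else 0) (j+1)]
  rw [← Finset.sum_subset (Finset.range_subset_range.2 hle) (fun x _ hx => by
    rw [if_neg]; simp only [Finset.mem_range] at hx; omega)]
  refine Finset.sum_congr rfl fun n hn => ?_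
  rw [if_pos (by simpa [Nat.lt_succ_iff] using hn)]
  rfl

omit [Fintype ι] in
/-- basis of `C` from a generator matrix -/
theorem genMatBasis (C : Submodule (Polynomial F) (ι → Polynomial F))
    (G : Matrix (Fin k) ι (Polynomial F)) (hG : IsGenMat C G) :
    ∃ b : Module.Basis (Fin k) (Polynomial F) C, ∀ i, (b i : ι → Polynomial F) = G i := by
  classical
  have hGC : ∀ i, G i ∈ C := by
    intro i; rw [hG.2]; exact Submodule.subset_span ⟨i, rfl⟩
  let v : Fin k → C := fun i => ⟨G i, hGC i⟩
  have hv_ind : LinearIndependent (Polynomial F) v := by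
    apply LinearIndependent.of_comp C.subtype
    have : (⇑C.subtype ∘ v) = fun i => G i := rfl
    rw [this]; exact hG.1
  have hv_span : Submodule.span (Polynomial F) (Set.range v) = ⊤ := by
    apply Submodule.map_injective_of_injective C.injective_subtype
    rw [Submodule.map_span, ← Set.range_comp]
    have h1 : (⇑C.subtype ∘ v) = fun i => G i := rfl
    rw [h1, Submodule.map_top, Submodule.range_subtype, hG.2]
  exact ⟨Module.Basis.mk hv_ind hv_span.ge, fun i => by simp [Module.Basis.mk_apply, v]⟩

theorem coeffMat_zero_rightInv (C : Submodule (Polynomial F) (ι → Polynomial F))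
    (G G' : Matrix (Fin k) ι (Polynomial F)) (hG : IsGenMat C G) (hG' : IsGenMat C G')
    (hbasic : ∃ Fi : Matrix ι (Fin k) (Polynomial F), G' * Fi = 1) :
    ∃ X : Matrix ι (Fin k) F, coeffMat G 0 * X = 1 := by
  classical
  obtain ⟨b, hb⟩ := genMatBasis C G hG
  obtain ⟨b', hb'⟩ := genMatBasis C G' hG'
  obtain ⟨Fi, hFi⟩ := hbasic
  set M : Matrix (Fin k) (Fin k) (Polynomial F) := b'.toMatrix ⇑b with hM
  set M' : Matrix (Fin k) (Fin k) (Polynomial F) := b.toMatrix ⇑b' with hM'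
  have hMM : M' * M = 1 := Module.Basis.toMatrix_mul_toMatrix_flip b b'
  have hGmat : G = Mᵀ * G' := by
    ext j p : 1
    have h1 : ∑ i, M i j • b' i = b j := Module.Basis.sum_toMatrix_smul_self b' ⇑b j
    have h2 : ((∑ i, M i j • b' i : C) : ι → Polynomial F) = (b j : ι → Polynomial F) :=
      congrArg _ h1
    have h3 : ((∑ i, M i j • b' i : C) : ι → Polynomial F) p = ∑ i, M i j * G' i p := by
      push_cast [Submodule.coe_sum]
      rw [Finset.sum_apply]
      refine Finset.sum_congr rfl fun i _ => ?_
      simp [hb']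
    rw [Matrix.mul_apply]
    have h4 : (b j : ι → Polynomial F) p = G j p := by rw [hb]
    calc G j p = ∑ i, M i j * G' i p := by rw [← h4, ← h2, h3]
      _ = ∑ i, Mᵀ j i * G' i p := rfl
  let ε : Polynomial F →+* F := Polynomial.constantCoeff
  have hcm : ∀ H : Matrix (Fin k) ι (Polynomial F), coeffMat H 0 = H.map ε := by
    intro H; ext i j; simp [coeffMat, ε, Polynomial.constantCoeff_apply]
  refine ⟨Fi.map ε * (M'.map ε)ᵀ, ?_⟩
  have h5 : coeffMat G 0 = (Mᵀ).map ε * G'.map ε := by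
    rw [hcm, hGmat, Matrix.map_mul]
  rw [h5]
  have h6 : G'.map ε * Fi.map ε = 1 := by
    rw [← Matrix.map_mul, hFi, Matrix.map_one ε (map_zero ε) (map_one ε)]
  have h7 : (Mᵀ).map ε * (M'ᵀ).map ε = 1 := by
    rw [← Matrix.map_mul, ← Matrix.transpose_mul, hMM, Matrix.transpose_one,
      Matrix.map_one ε (map_zero ε) (map_one ε)]
  calc Mᵀ.map ε * G'.map ε * (Fi.map ε * (M'.map ε)ᵀ)
      = Mᵀ.map ε * (G'.map ε * Fi.map ε) * (M'.map ε)ᵀ := by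
        rw [Matrix.mul_assoc, Matrix.mul_assoc, Matrix.mul_assoc]
    _ = Mᵀ.map ε * (M'.map ε)ᵀ := by rw [h6, Matrix.mul_one]
    _ = 1 := by rw [← Matrix.transpose_map]; exact h7

theorem exists_infoSet {F : Type*} [Field F] {ι : Type*} [Fintype ι] [DecidableEq ι] {k : ℕ}
    (A : Matrix (Fin k) ι F) (hA : ∃ Fi : Matrix ι (Fin k) F, A * Fi = 1) :
    ∃ s : Finset ι, s.card = k ∧
      ∀ w : ι → F, ∃ x : Fin k → F, ∀ p ∈ s, Matrix.vecMul x A p = w p := by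
  classical
  obtain ⟨Fi, hFi⟩ := hA
  have hspan : Submodule.span F (Set.range fun p => Aᵀ p) = ⊤ := by
    rw [eq_top_iff]
    rintro y -
    have hy : y = A.mulVec (Fi.mulVec y) := by
      rw [Matrix.mulVec_mulVec, hFi, Matrix.one_mulVec]
    have h1 : A.mulVec (Fi.mulVec y) = ∑ p, (Fi.mulVec y) p • Aᵀ p := by
      funext i; simp [Matrix.mulVec, dotProduct, Finset.sum_apply, mul_comm]
    rw [hy, h1]
    exact Submodule.sum_mem _ fun p _ => Submodule.smul_mem _ _
      (Submodule.subset_span (Set.mem_range_self p))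
  obtain ⟨b, hb_sub, hb_span, hb_ind⟩ := exists_linearIndependent F (Set.range fun p => Aᵀ p)
  have hb_top : ⊤ ≤ Submodule.span F (Set.range (Subtype.val : b → (Fin k → F))) := by
    rw [Subtype.range_coe, hb_span, hspan]
  let e : Module.Basis b F (Fin k → F) := Module.Basis.mk hb_ind hb_top
  haveI : Fintype b := FiniteDimensional.fintypeBasisIndex e
  have hcard : Fintype.card b = k := by
    have := Module.finrank_eq_card_basis e
    simpa using this.symm
  have hpick : ∀ v : b, ∃ p : ι, Aᵀ p = (v : Fin k → F) := fun v => hb_sub v.2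
  choose pick hpick_spec using hpick
  have hpick_inj : Function.Injective pick := by
    intro v v' hvv'
    have : (v : Fin k → F) = (v' : Fin k → F) := by
      rw [← hpick_spec v, ← hpick_spec v', hvv']
    exact Subtype.ext this
  refine ⟨Finset.univ.image pick, ?_, ?_⟩
  · rw [Finset.card_image_of_injective _ hpick_inj, Finset.card_univ, hcard]
  · intro w
    let Ψ : (Fin k → F) →ₗ[F] (b → F) :=
      { toFun := fun x v => dotProduct x (v : Fin k → F)
        map_add' := by intro x y; funext v; simp [add_dotProduct]
        map_smul' := by intro c x; funext v; simp [smul_dotProduct] }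
    have hΨinj : Function.Injective Ψ := by
      rw [injective_iff_map_eq_zero]
      intro x hx
      let φ : (Fin k → F) →ₗ[F] F :=
        { toFun := fun y => dotProduct x y
          map_add' := by intro y z; simp [dotProduct_add]
          map_smul' := by intro c y; simp [dotProduct_smul] }
      have hbker : b ⊆ (LinearMap.ker φ : Set _) := by
        intro y hy
        have : dotProduct x y = 0 := congrFun hx ⟨y, hy⟩
        simpa [φ, LinearMap.mem_ker] using this
      have hker : Submodule.span F b ≤ LinearMap.ker φ := Submodule.span_le.2 hbker
      funext i
      have hi : dotProduct x (Pi.single i 1) = 0 := by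
        have : (Pi.single i 1 : Fin k → F) ∈ LinearMap.ker φ := by
          apply hker
          rw [hb_span, hspan]; trivial
        simpa [φ, LinearMap.mem_ker] using this
      simpa using hi
    have hrk : Module.finrank F (Fin k → F) = Module.finrank F (b → F) := by
      simp [hcard]
    have hΨsurj : Function.Surjective Ψ :=
      (LinearMap.linearEquivOfInjective Ψ hΨinj hrk).surjective
    obtain ⟨x, hx⟩ := hΨsurj (fun v => w (pick v))
    refine ⟨x, fun p hp => ?_⟩
    obtain ⟨v, -, rfl⟩ := Finset.mem_image.1 hp
    have h1 : Matrix.vecMul x A (pick v) = dotProduct x (Aᵀ (pick v)) := rfl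
    rw [h1, hpick_spec v]
    exact congrFun hx v

set_option maxHeartbeats 1600000 in
theorem statement3 {Fq : Type*} [Field Fq] [Fintype Fq]
    {Fqm : Type*} [Field Fqm] [Algebra Fq Fqm]
    {m g r k N δ : ℕ} (hm : 0 < m) (hg : 0 < g) (hr : 0 < r)
    (hN : N = g * r) (hk1 : 1 ≤ k) (hkN : k < N)
    (B : Module.Basis (Fin m) Fq Fqm)
    (C : Submodule (Polynomial Fqm) (Fin g × Fin r → Polynomial Fqm))
    (hnc : NonCatastrophic C k)
    (G : Matrix (Fin k) (Fin g × Fin r) (Polynomial Fqm))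
    (hG : IsRedGenMat C G)
    (hδ : ∑ i, rowDeg G i = δ) :
    (∀ j : ℕ, srColDist Fq B G j ≤ (N - k) * (j + 1) + 1) ∧
    (∀ j : ℕ, srColDist Fq B G (j + 1) = (N - k) * (j + 2) + 1 →
        srColDist Fq B G j = (N - k) * (j + 1) + 1) ∧
    (∀ j : ℕ, srColDist Fq B G j = (N - k) * (j + 1) + 1 →
        j ≤ δ / k + δ / (N - k)) := by
  classical
  subst hN
  obtain ⟨G', hG'red, hG'basic⟩ := hnc
  have hrinv : ∃ X : Matrix (Fin g × Fin r) (Fin k) Fqm, coeffMat G 0 * X = 1 :=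
    coeffMat_zero_rightInv C G G' hG.1 hG'red.1 hG'basic.2
  obtain ⟨sI, hsIcard, hsolve⟩ := exists_infoSet (coeffMat G 0) hrinv
  have hcardι : Fintype.card (Fin g × Fin r) = g * r := by simp
  have hsne : sI.Nonempty := Finset.card_pos.1 (by rw [hsIcard]; omega)
  obtain ⟨p0, hp0⟩ := hsne
  -- recursively constructed input sequence for Part 1
  set step : ∀ n : ℕ, (Fin n → (Fin k → Fqm)) → (Fin k → Fqm) := fun n prev =>
    (hsolve (fun p => (if n = 0 ∧ p = p0 then (1:Fqm) else 0)
      - ∑ a : Fin n, Matrix.vecMul (prev a) (coeffMat G (n - a.1)) p)).choose with hstep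
  set uN : ℕ → Fin k → Fqm := natRec step with huNdef
  have huN : ∀ n, ∀ p ∈ sI, Matrix.vecMul (uN n) (coeffMat G 0) p
      = (if n = 0 ∧ p = p0 then (1:Fqm) else 0)
        - ∑ a ∈ Finset.range n, Matrix.vecMul (uN a) (coeffMat G (n - a)) p := by
    intro n p hp
    have h1 : uN n = step n (fun a => uN a.1) := by
      rw [huNdef]; exact natRec_eq step n
    have h2 := (hsolve (fun p => (if n = 0 ∧ p = p0 then (1:Fqm) else 0)
      - ∑ a : Fin n, Matrix.vecMul (uN a.1) (coeffMat G (n - a.1)) p)).choose_spec p hp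
    rw [h1, hstep]
    refine h2.trans ?_
    congr 1
    exact Fin.sum_univ_eq_sum_range (fun a => Matrix.vecMul (uN a) (coeffMat G (n - a)) p) n
  have hblock : ∀ n, ∀ p ∈ sI,
      ∑ a ∈ Finset.range (n+1), Matrix.vecMul (uN a) (coeffMat G (n - a)) p
        = if n = 0 ∧ p = p0 then (1:Fqm) else 0 := by
    intro n p hp
    rw [Finset.sum_range_succ, Nat.sub_self, huN n p hp]
    ring
  have hu0 : uN 0 ≠ 0 := by
    intro h0
    have hb := hblock 0 p0 hp0
    rw [Finset.sum_range_one, h0, Matrix.zero_vecMul] at hb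
    simp at hb
  have hmem : ∀ j : ℕ, Matrix.vecMul (fun q : Fin (j+1) × Fin k => uN q.1.1 q.2)
      (slidingMat G j) ∈ colBlockCode G j := by
    intro j
    refine ⟨_, ?_, rfl⟩
    intro hcon
    apply hu0
    funext i
    have := congrFun hcon i
    simpa using this
  have hwt : ∀ j : ℕ, srWtVec Fq B (Matrix.vecMul
      (fun q : Fin (j+1) × Fin k => uN q.1.1 q.2) (slidingMat G j)) ≤ (g*r - k)*(j+1)+1 := by
    intro j
    set v := Matrix.vecMul (fun q : Fin (j+1) × Fin k => uN q.1.1 q.2) (slidingMat G j) with hv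
    have hsupp : ∀ q, v q ≠ 0 →
        q ∈ ((Finset.univ : Finset (Fin (j+1))) ×ˢ sIᶜ) ∪ {((0:Fin (j+1)), p0)} := by
      rintro ⟨h, p⟩ hq
      by_cases hpI : p ∈ sI
      · have hval : v (h, p) = ∑ n ∈ Finset.range (h.1+1),
            Matrix.vecMul (uN n) (coeffMat G (h.1 - n)) p := by
          rw [hv]; exact vecMul_sliding G uN h p
        have h2 := hblock h.1 p hpI
        have h3 : h.1 = 0 ∧ p = p0 := by
          by_contra hcon
          exact hq (by rw [hval, h2, if_neg hcon])
        refine Finset.mem_union_right _ ?_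
        have h4 : ((h, p) : Fin (j+1) × (Fin g × Fin r)) = ((0:Fin (j+1)), p0) := by
          refine Prod.ext (Fin.ext ?_) h3.2
          simp [h3.1]
        rw [h4]
        exact Finset.mem_singleton_self _
      · exact Finset.mem_union_left _
          (Finset.mem_product.2 ⟨Finset.mem_univ _, Finset.mem_compl.2 hpI⟩)
    refine (srWtVec_le B _ _ hsupp).trans ?_
    refine (Finset.card_union_le _ _).trans ?_
    rw [Finset.card_product, Finset.card_univ, Fintype.card_fin, Finset.card_compl,
      hsIcard, hcardι, Finset.card_singleton, Nat.mul_comm]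
  have part1 : ∀ j : ℕ, srColDist Fq B G j ≤ (g*r - k) * (j + 1) + 1 := by
    intro j
    exact le_trans (Nat.sInf_le ⟨_, hmem j, rfl⟩) (hwt j)
  have hne : ∀ j : ℕ, (srWtVec Fq B '' colBlockCode G j).Nonempty :=
    fun j => ⟨_, _, hmem j, rfl⟩
  clear hwt hmem hu0 hblock huN
  clear huNdef uN
  clear hstep step
  refine ⟨part1, ?_, ?_⟩
  · -- Part 2
    intro j heq2
    by_contra hnej
    have hlt : srColDist Fq B G j ≤ (g*r - k)*(j+1) :=
      Nat.lt_succ_iff.1 (lt_of_le_of_ne (part1 j) hnej)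
    obtain ⟨v, hvcode, hveq⟩ := Nat.sInf_mem (hne j)
    obtain ⟨u, huu0, rfl⟩ := hvcode
    set uNb : ℕ → Fin k → Fqm :=
      fun n => if hn : n < j+1 then (fun i => u (⟨n, hn⟩, i)) else 0 with huNbdef
    set x : Fin k → Fqm := (hsolve (fun p =>
      - ∑ a ∈ Finset.range (j+1), Matrix.vecMul (uNb a) (coeffMat G (j+1-a)) p)).choose with hxdef
    have hxspec := (hsolve (fun p =>
      - ∑ a ∈ Finset.range (j+1), Matrix.vecMul (uNb a) (coeffMat G (j+1-a)) p)).choose_spec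
    set uN2 : ℕ → Fin k → Fqm :=
      fun n => if hn : n < j+1 then (fun i => u (⟨n, hn⟩, i)) else x with huN2def
    have huN2b : ∀ a, a < j+1 → uN2 a = uNb a := by
      intro a ha; rw [huN2def, huNbdef]; simp [dif_pos ha, Nat.le_of_lt_succ ha]
    have huu : (fun q : Fin (j+1) × Fin k => uN2 q.1.1 q.2) = u := by
      funext q
      rw [huN2def]
      simp only [dif_pos q.1.2]
    set v' := Matrix.vecMul (fun q : Fin (j+2) × Fin k => uN2 q.1.1 q.2)
      (slidingMat G (j+1)) with hv'def
    have hmem' : v' ∈ colBlockCode G (j+1) := by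
      refine ⟨_, ?_, rfl⟩
      have he : (fun i => uN2 (((0:Fin (j+2))):ℕ) i) = (fun i => u (0, i)) := by
        funext i
        rw [huN2def]
        simp only [dif_pos (show ((0:Fin (j+2)):ℕ) < j+1 by simp)]
        norm_num
      exact he ▸ huu0
    have hblk : ∀ h : Fin (j+1), (fun p => v' (h.castSucc, p))
        = (fun p => Matrix.vecMul u (slidingMat G j) (h, p)) := by
      intro h; funext p
      have e1 : v' (h.castSucc, p) = ∑ n ∈ Finset.range (h.1+1),
          Matrix.vecMul (uN2 n) (coeffMat G (h.1 - n)) p := by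
        rw [hv'def]
        have := vecMul_sliding G uN2 h.castSucc p
        simpa using this
      have e2 : Matrix.vecMul u (slidingMat G j) (h, p) = ∑ n ∈ Finset.range (h.1+1),
          Matrix.vecMul (uN2 n) (coeffMat G (h.1 - n)) p := by
        rw [← huu]; exact vecMul_sliding G uN2 h p
      rw [e1, e2]
    have hsplit : srWtVec Fq B v' = srWtVec Fq B (Matrix.vecMul u (slidingMat G j))
        + srWt Fq B (fun p => v' (Fin.last (j+1), p)) := by
      have hss : (fun q : Fin (j+1) × (Fin g × Fin r) => v' (q.1.castSucc, q.2))
          = Matrix.vecMul u (slidingMat G j) := by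
        funext q; exact congrFun (hblk q.1) q.2
      rw [srWtVec_succ Fq B v', hss]
    have hlast : srWt Fq B (fun p => v' (Fin.last (j+1), p)) ≤ g*r - k := by
      refine (srWt_le B _ sIᶜ ?_).trans ?_
      · intro p hpne
        rw [Finset.mem_compl]
        intro hpI
        apply hpne
        have e1 : v' (Fin.last (j+1), p) = ∑ n ∈ Finset.range (j+2),
            Matrix.vecMul (uN2 n) (coeffMat G (j+1 - n)) p := by
          rw [hv'def]
          have := vecMul_sliding G uN2 (Fin.last (j+1)) p
          simpa using this
        rw [e1, Finset.sum_range_succ]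
        have e2 : ∀ a ∈ Finset.range (j+1), Matrix.vecMul (uN2 a) (coeffMat G (j+1-a)) p
            = Matrix.vecMul (uNb a) (coeffMat G (j+1-a)) p := fun a ha => by
          rw [huN2b a (Finset.mem_range.1 ha)]
        rw [Finset.sum_congr rfl e2]
        have e3 : uN2 (j+1) = x := by rw [huN2def]; simp
        rw [e3, Nat.sub_self, hxspec p hpI]
        ring
      · rw [Finset.card_compl, hsIcard, hcardι]
    have hfinal : srColDist Fq B G (j+1) ≤ (g*r-k)*(j+1) + (g*r - k) := by
      refine le_trans (Nat.sInf_le ⟨v', hmem', rfl⟩) ?_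
      rw [hsplit]
      have : srWtVec Fq B (Matrix.vecMul u (slidingMat G j)) ≤ (g*r-k)*(j+1) := by
        rw [hveq]; exact hlt
      omega
    rw [heq2] at hfinal
    have hmul : (g*r - k)*(j+2) = (g*r-k)*(j+1) + (g*r - k) := by ring
    omega
  · -- Part 3
    intro j heq3
    have hk0 : 0 < k := hk1
    have htpos : 0 < g*r - k := by omega
    obtain ⟨i0, -, hi0⟩ := Finset.exists_min_image (Finset.univ : Finset (Fin k)) (rowDeg G)
      ⟨⟨0, hk0⟩, Finset.mem_univ _⟩
    set ν := rowDeg G i0 with hνdef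
    have hνdiv : ν ≤ δ / k := by
      rw [Nat.le_div_iff_mul_le hk0]
      calc ν * k = ∑ _i : Fin k, ν := by
            rw [Finset.sum_const, Finset.card_univ, Fintype.card_fin, smul_eq_mul, Nat.mul_comm]
        _ ≤ ∑ i, rowDeg G i := Finset.sum_le_sum fun i _ => hi0 i (Finset.mem_univ i)
        _ = δ := hδ
    by_cases hjν : j ≤ ν
    · exact le_trans hjν (le_trans hνdiv (Nat.le_add_right _ _))
    push_neg at hjν
    set ℓ := (Finset.univ.filter fun i : Fin k => rowDeg G i = ν).card with hℓdef
    have hl1 : 1 ≤ ℓ := by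
      rw [hℓdef]
      refine Finset.card_pos.2 ⟨i0, ?_⟩
      simp [hνdef]
    have hlk : ℓ ≤ k := by
      rw [hℓdef]
      calc _ ≤ (Finset.univ : Finset (Fin k)).card := Finset.card_filter_le _ _
        _ = k := by simp
    have hδl : k*ν + k ≤ δ + ℓ := by
      have hsum1 : ∀ i : Fin k, ν + (if rowDeg G i = ν then 0 else 1) ≤ rowDeg G i := by
        intro i
        have := hi0 i (Finset.mem_univ i)
        by_cases hPi : rowDeg G i = ν <;> simp [hPi] <;> omega
      have hsum2 := Finset.sum_le_sum (fun i (_ : i ∈ Finset.univ) => hsum1 i)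
      rw [hδ] at hsum2
      rw [Finset.sum_add_distrib, Finset.sum_const, Finset.card_univ, Fintype.card_fin,
        smul_eq_mul] at hsum2
      have hite : (∑ i : Fin k, if rowDeg G i = ν then (0:ℕ) else 1) = k - ℓ := by
        have h1 : (∑ i : Fin k, if rowDeg G i = ν then (0:ℕ) else 1)
            = (Finset.univ.filter fun i : Fin k => ¬ (rowDeg G i = ν)).card := by
          rw [Finset.card_filter]
          refine Finset.sum_congr rfl fun i _ => ?_
          by_cases hPi : rowDeg G i = ν <;> simp [hPi]
        have h2 := Finset.card_filter_add_card_filter_not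
          (s := (Finset.univ : Finset (Fin k))) (p := fun i => rowDeg G i = ν)
        rw [Finset.card_univ, Fintype.card_fin] at h2
        rw [h1]
        omega
      rw [hite] at hsum2
      omega
    have hTbound : ℓ - 1 ≤ (Finset.univ : Finset (Fin (ν+1) × (Fin g × Fin r))).card := by
      rw [Finset.card_univ, Fintype.card_prod, Fintype.card_fin, Fintype.card_prod,
        Fintype.card_fin, Fintype.card_fin]
      have : g*r ≤ (ν+1)*(g*r) := Nat.le_mul_of_pos_left _ (Nat.succ_pos ν)
      omega
    obtain ⟨T, -, hTcard⟩ := Finset.exists_subset_card_eq hTbound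
    have hcardS : Fintype.card {i : Fin k // rowDeg G i = ν} = ℓ := by
      rw [Fintype.card_subtype]
    set Φ : ({i : Fin k // rowDeg G i = ν} → Fqm) →ₗ[Fqm] ((Fin (ν+1) × (Fin g × Fin r)) → Fqm) :=
      { toFun := fun c q => ∑ i : {i : Fin k // rowDeg G i = ν}, c i * (G i.1 q.2).coeff q.1.1
        map_add' := by intro c d; funext q; simp [add_mul, Finset.sum_add_distrib]
        map_smul' := by
          intro a c; funext q
          simp [Finset.mul_sum, mul_assoc] } with hΦdef
    set ψ : ({i : Fin k // rowDeg G i = ν} → Fqm) →ₗ[Fqm] ({q : Fin (ν+1) × (Fin g × Fin r) // q ∈ T} → Fqm) :=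
      (LinearMap.funLeft Fqm Fqm (Subtype.val)).comp Φ with hψdef
    have hψnotinj : ¬ Function.Injective ψ := by
      intro hinj
      have hle := LinearMap.finrank_le_finrank_of_injective hinj
      have h1 : Module.finrank Fqm ({i : Fin k // rowDeg G i = ν} → Fqm) = ℓ := by simp [hcardS]
      have h2 : Module.finrank Fqm ({q : Fin (ν+1) × (Fin g × Fin r) // q ∈ T} → Fqm)
          = T.card := by simp
      rw [h1, h2, hTcard] at hle
      omega
    obtain ⟨c1, c2, hcc, hcne⟩ := Function.not_injective_iff.1 hψnotinj
    set c : {i : Fin k // rowDeg G i = ν} → Fqm := c1 - c2 with hcdef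
    have hc0 : c ≠ 0 := sub_ne_zero.2 hcne
    have hψc : ψ c = 0 := by rw [hcdef, map_sub, hcc, sub_self]
    have hcT : ∀ q ∈ T, Φ c q = 0 := by
      intro q hq
      exact congrFun hψc ⟨q, hq⟩
    set uN3 : ℕ → Fin k → Fqm :=
      fun n i => if n = 0 then (if h : rowDeg G i = ν then c ⟨i, h⟩ else 0) else 0 with huN3def
    set v := Matrix.vecMul (fun q : Fin (j+1) × Fin k => uN3 q.1.1 q.2)
      (slidingMat G j) with hvdef
    have hvmem : v ∈ colBlockCode G j := by
      refine ⟨_, ?_, rfl⟩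
      obtain ⟨i1, hi1⟩ : ∃ i : {i : Fin k // rowDeg G i = ν}, c i ≠ 0 := by
        by_contra hall
        push_neg at hall
        exact hc0 (funext fun i => hall i)
      intro hcon
      apply hi1
      have := congrFun hcon i1.1
      rw [huN3def] at this
      simp only [Fin.val_zero, if_pos rfl, Pi.zero_apply] at this
      rw [dif_pos i1.2] at this
      simpa using this
    have hvval : ∀ (h : Fin (j+1)) p, v (h, p) = ∑ i : {i : Fin k // rowDeg G i = ν}, c i * (G i.1 p).coeff h.1 := by
      intro h p
      rw [hvdef]
      rw [vecMul_sliding G uN3 h p]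
      rw [Finset.sum_eq_single_of_mem 0 (Finset.mem_range.2 (Nat.succ_pos _)) ?side]
      case side =>
        intro n _ hn0
        have hz : uN3 n = 0 := by funext i; rw [huN3def]; simp [hn0]
        rw [hz, Matrix.zero_vecMul]
        rfl
      rw [Nat.sub_zero, vecMul_coeffMat]
      have e3 : (∑ i : Fin k, uN3 0 i * (G i p).coeff h.1)
          = ∑ i ∈ Finset.univ.filter (fun i : Fin k => rowDeg G i = ν),
              uN3 0 i * (G i p).coeff h.1 := by
        refine (Finset.sum_subset (Finset.filter_subset _ _) ?_).symm
        intro i _ hi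
        simp only [Finset.mem_filter, Finset.mem_univ, true_and] at hi
        rw [huN3def]
        simp [hi]
      rw [e3, Finset.sum_subtype (p := fun i : Fin k => rowDeg G i = ν) _ (by simp)
        (fun i => uN3 0 i * (G i p).coeff h.1)]
      refine Finset.sum_congr rfl fun i _ => ?_
      rw [huN3def]
      simp only [if_pos rfl]
      rw [dif_pos i.2]
      simp
    have hrowle : ∀ (i : Fin k) p, (G i p).natDegree ≤ rowDeg G i := by
      intro i p
      exact Finset.le_sup (f := fun q => (G i q).natDegree) (Finset.mem_univ p)
    have hsupp : ∀ q : Fin (j+1) × (Fin g × Fin r), v q ≠ 0 →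
        q ∈ (Finset.univ \ T).image
          (fun q' : Fin (ν+1) × (Fin g × Fin r) =>
            ((⟨q'.1.1, by omega⟩ : Fin (j+1)), q'.2)) := by
      rintro ⟨h, p⟩ hq
      have hhν : h.1 ≤ ν := by
        by_contra hgt
        push_neg at hgt
        apply hq
        rw [hvval h p]
        refine Finset.sum_eq_zero fun i _ => ?_
        rw [Polynomial.coeff_eq_zero_of_natDegree_lt
          (lt_of_le_of_lt (hrowle i.1 p) (by rw [i.2]; omega))]
        ring
      have hlt' : h.1 < ν + 1 := by omega
      have hT : ((⟨h.1, hlt'⟩ : Fin (ν+1)), p) ∉ T := by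
        intro hmemT
        apply hq
        have := hcT _ hmemT
        rw [hΦdef] at this
        simp only [LinearMap.coe_mk, AddHom.coe_mk] at this
        rw [hvval h p]
        exact this
      refine Finset.mem_image.2 ⟨((⟨h.1, hlt'⟩ : Fin (ν+1)), p),
        Finset.mem_sdiff.2 ⟨Finset.mem_univ _, hT⟩, ?_⟩
      exact Prod.ext (Fin.ext rfl) rfl
    have hwt3 : srWtVec Fq B v ≤ (ν+1)*(g*r) - (ℓ - 1) := by
      refine (srWtVec_le B _ _ hsupp).trans ?_
      refine Finset.card_image_le.trans ?_
      rw [Finset.card_sdiff_of_subset (Finset.subset_univ T), hTcard, Finset.card_univ,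
        Fintype.card_prod, Fintype.card_fin, Fintype.card_prod, Fintype.card_fin,
        Fintype.card_fin]
    have hle3 : srColDist Fq B G j ≤ srWtVec Fq B v := Nat.sInf_le ⟨v, hvmem, rfl⟩
    rw [heq3] at hle3
    have hc1 : ℓ - 1 ≤ (ν+1)*(g*r) := by
      have : g*r ≤ (ν+1)*(g*r) := Nat.le_mul_of_pos_left _ (Nat.succ_pos ν)
      omega
    have hA : (g*r - k)*(j+1) + 1 + (ℓ-1) ≤ (ν+1)*(g*r) :=
      (Nat.le_sub_iff_add_le hc1).1 (hle3.trans hwt3)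
    have hB : (ν+1)*(g*r) = (g*r-k)*(ν+1) + (k*ν + k) := by
      have hgr : g*r = (g*r - k) + k := by omega
      calc (ν+1)*(g*r) = (ν+1)*((g*r-k) + k) := by rw [← hgr]
        _ = (g*r-k)*(ν+1) + (k*ν + k) := by ring
    have hC : (g*r-k)*(j+1) = (g*r-k)*(ν+1) + (g*r-k)*(j-ν) := by
      have hj1 : j+1 = (ν+1) + (j-ν) := by omega
      rw [hj1, Nat.mul_add]
    have hsub1 : ℓ - 1 + 1 = ℓ := by omega
    have hD : (g*r-k)*(j-ν) ≤ δ := by linarith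
    have hE : j - ν ≤ δ / (g*r - k) :=
      (Nat.le_div_iff_mul_le htpos).2 (by rw [Nat.mul_comm]; exact hD)
    omega


end LRCC
end
end

section
/- In Construction 1, if the outer code C_out ⊆ F_{q^m}[D]^N is non-catastrophic, then the global code C_glob ⊆ F_{q^m}[D]^n is non-catastrophic, and moreover for any Δ = Δ_1 ∪ Δ_2 ∪ ... ∪ Δ_g ⊆ {1,...,n} with Δ_i ⊆ Γ_i and |Δ_i| ≥ r for i = 1,...,g (where Γ_i = {(r+∂−1)(i−1)+1, ..., (r+∂−1)i}), the restricted code (C_glob)_Δ is non-catastrophic. -/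
open Polynomial Matrix Finset

noncomputable section

namespace LRCC

variable {F : Type*} [Field F] {ι : Type*} [Fintype ι] {k : ℕ}

section Aux

private lemma sum_smul_eq_vecMul {R : Type*} [CommSemiring R] {ι J : Type*} [Fintype ι]
    (u : ι → R) (P : Matrix ι J R) : ∑ i, u i • P i = u ᵥ* P := by
  funext j
  simp [Matrix.vecMul, dotProduct, Finset.sum_apply]

private lemma mul_row {R : Type*} [CommSemiring R] {κ ι J : Type*} [Fintype ι]
    (P : Matrix κ ι R) (M : Matrix ι J R) (i : κ) : (P * M) i = P i ᵥ* M := by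
  funext j
  simp [Matrix.mul_apply, Matrix.vecMul, dotProduct]

/-- A matrix with linearly independent rows over a field has a right inverse. -/
private lemma exists_right_inv {K : Type*} [Field K] {ι J : Type*} [Fintype ι] [Fintype J]
    [DecidableEq ι] [DecidableEq J] (M : Matrix ι J K)
    (h : LinearIndependent K (fun i => M i)) : ∃ N : Matrix J ι K, M * N = 1 := by
  have hker : LinearMap.ker (Matrix.vecMulLinear M) = ⊥ := by
    rw [LinearMap.ker_eq_bot']
    intro u hu
    have hsum : ∑ i, u i • M i = 0 := by
      funext j
      have := congrFun hu j
      simpa [Matrix.vecMulLinear_apply, Matrix.vecMul, dotProduct,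
        Finset.sum_apply] using this
    have := Fintype.linearIndependent_iff.mp h u hsum
    funext i
    exact this i
  obtain ⟨gl, hgl⟩ := (Matrix.vecMulLinear M).exists_leftInverse_of_injective hker
  refine ⟨Matrix.of fun j i => gl (Pi.single j 1) i, ?_⟩
  ext i i'
  have hMi : M i = Matrix.vecMulLinear M (Pi.single i 1) := by
    funext j
    simp [Matrix.vecMulLinear_apply, Matrix.vecMul, dotProduct, Pi.single_apply,
      ite_mul]
  have key : ∑ j, M i j • gl (Pi.single j 1) = Pi.single i 1 := by
    have h1 : gl (∑ j, M i j • (Pi.single j 1 : J → K)) = ∑ j, M i j • gl (Pi.single j 1) := by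
      rw [map_sum]
      exact Finset.sum_congr rfl fun j _ => gl.map_smul _ _
    have h2 : (∑ j, M i j • (Pi.single j 1 : J → K)) = M i := by
      funext l
      simp [Pi.single_apply, Finset.sum_apply, mul_ite]
    rw [← h1, h2, hMi, ← LinearMap.comp_apply, hgl, LinearMap.id_apply]
  rw [Matrix.mul_apply]
  show ∑ j, M i j * gl (Pi.single j 1) i' = (1 : Matrix ι ι K) i i'
  have h4 : ∑ j, M i j * gl (Pi.single j 1) i' = (∑ j, M i j • gl (Pi.single j 1)) i' := by
    simp [Finset.sum_apply]
  rw [h4, key, Matrix.one_apply]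
  simp [Pi.single_apply, eq_comm]

private lemma rowDeg_mul_le {F : Type*} [Field F] {ι J : Type*} [Fintype ι] [Fintype J] {k : ℕ}
    (P : Matrix (Fin k) ι (Polynomial F)) (Q : Matrix ι J (Polynomial F))
    (hQ : ∀ i j, (Q i j).natDegree = 0) (i : Fin k) : rowDeg (P * Q) i ≤ rowDeg P i := by
  apply Finset.sup_le
  intro j _
  rw [Matrix.mul_apply]
  apply Polynomial.natDegree_sum_le_of_forall_le
  intro l _
  calc (P i l * Q l j).natDegree ≤ (P i l).natDegree + (Q l j).natDegree :=
        Polynomial.natDegree_mul_le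
    _ = (P i l).natDegree := by rw [hQ, add_zero]
    _ ≤ rowDeg P i := Finset.le_sup (f := fun j => (P i j).natDegree) (Finset.mem_univ l)

/-- Key lemma: the image of a non-catastrophic code under right multiplication by a
constant matrix with a constant right inverse is non-catastrophic. -/
private lemma nonCat_map {F : Type*} [Field F] {ι J : Type*} [Fintype ι] [Fintype J]
    [DecidableEq ι] [DecidableEq J] {k : ℕ}
    (C : Submodule (Polynomial F) (ι → Polynomial F))
    (M : Matrix ι J (Polynomial F)) (N : Matrix J ι (Polynomial F))
    (hMN : M * N = 1)
    (hM : ∀ i j, (M i j).natDegree = 0) (hN : ∀ i j, (N i j).natDegree = 0)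
    (h : NonCatastrophic C k) : NonCatastrophic (C.map (Matrix.vecMulLinear M)) k := by
  obtain ⟨G, ⟨hGgen, hGmin⟩, ⟨-, Fi, hFi⟩⟩ := h
  have hinj : Function.Injective (Matrix.vecMulLinear M) := by
    intro u v huv
    have h1 : u ᵥ* M = v ᵥ* M := huv
    have h2 := congrArg (fun w => w ᵥ* N) h1
    simpa [Matrix.vecMul_vecMul, hMN, Matrix.vecMul_one] using h2
  have hGMgen : IsGenMat (C.map (Matrix.vecMulLinear M)) (G * M) := by
    constructor
    · rw [Fintype.linearIndependent_iff]
      intro u hu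
      have h1 : u ᵥ* (G * M) = 0 := by rw [← sum_smul_eq_vecMul]; exact hu
      have h2 : u ᵥ* G = 0 := by
        have h3 := congrArg (fun w => w ᵥ* N) h1
        simpa [Matrix.vecMul_vecMul, Matrix.mul_assoc, hMN, Matrix.vecMul_one,
          Matrix.mul_one] using h3
      exact Fintype.linearIndependent_iff.mp hGgen.1 u
        (by rw [sum_smul_eq_vecMul]; exact h2)
    · rw [hGgen.2, Submodule.map_span, ← Set.range_comp]
      rfl
  refine ⟨G * M, ⟨hGMgen, ?_⟩, hGMgen, N * Fi, by
    rw [Matrix.mul_assoc, ← Matrix.mul_assoc M N Fi, hMN, Matrix.one_mul, hFi]⟩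
  intro G'' hG''gen
  set V : Matrix (Fin k) ι (Polynomial F) := G'' * N with hV
  have hrows : ∀ i, V i ∈ C ∧ (V * M) i = G'' i := by
    intro i
    have hGi : G'' i ∈ C.map (Matrix.vecMulLinear M) := by
      rw [hG''gen.2]
      exact Submodule.subset_span ⟨i, rfl⟩
    obtain ⟨v, hv, hveq⟩ := hGi
    have hveq' : v ᵥ* M = G'' i := hveq
    have hVi : V i = v := by
      rw [hV, mul_row, ← hveq', Matrix.vecMul_vecMul, hMN, Matrix.vecMul_one]
    exact ⟨hVi ▸ hv, by rw [mul_row, hVi, hveq']⟩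
  have hVM : V * M = G'' := by
    funext i
    exact (hrows i).2
  have hVgen : IsGenMat C V := by
    constructor
    · rw [Fintype.linearIndependent_iff]
      intro u hu
      have h1 : u ᵥ* V = 0 := by rw [← sum_smul_eq_vecMul]; exact hu
      have h2 : u ᵥ* G'' = 0 := by
        have h3 := congrArg (fun w => w ᵥ* M) h1
        simpa [Matrix.vecMul_vecMul, hVM, Matrix.zero_vecMul] using h3
      exact Fintype.linearIndependent_iff.mp hG''gen.1 u
        (by rw [sum_smul_eq_vecMul]; exact h2)
    · apply Submodule.map_injective_of_injective hinj
      rw [Submodule.map_span, ← Set.range_comp]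
      have hco : (⇑(Matrix.vecMulLinear M) ∘ fun i => V i) = fun i => G'' i := by
        funext i
        rw [Function.comp_apply, Matrix.vecMulLinear_apply, ← mul_row, hVM]
      rw [hco, ← hG''gen.2]
  calc ∑ i, rowDeg (G * M) i ≤ ∑ i, rowDeg G i :=
        Finset.sum_le_sum fun i _ => rowDeg_mul_le G M hM i
    _ ≤ ∑ i, rowDeg V i := hGmin V hVgen
    _ ≤ ∑ i, rowDeg G'' i :=
        Finset.sum_le_sum fun i _ => rowDeg_mul_le G'' N hN i

end Aux

theorem statement4 {Fq : Type*} [Field Fq] [Fintype Fq]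
    {Fqm : Type*} [Field Fqm] [Algebra Fq Fqm]
    {g r d k : ℕ} (hg : 0 < g) (hr : 0 < r) (hd : 0 < d)
    (hq : r + d - 1 ≤ Fintype.card Fq)
    (Cout : Submodule (Polynomial Fqm) (Fin g × Fin r → Polynomial Fqm))
    (hout : IsConvCode Cout k)
    (A : Matrix (Fin r) (Fin (r + d - 1)) Fq)
    (hA1 : LinearIndependent Fq (fun i => A i))
    (hA2 : ∀ u : Fin r → Fq, u ≠ 0 → d ≤ hWt (Matrix.vecMul u A))
    (hnc : NonCatastrophic Cout k) :
    NonCatastrophic (globCode Fq Cout A) k ∧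
    ∀ Δ : Fin g → Finset (Fin (r + d - 1)), (∀ a, r ≤ (Δ a).card) →
      NonCatastrophic
        (restrictCode (globCode Fq Cout A)
          (Finset.univ.filter fun p : Fin g × Fin (r + d - 1) => p.2 ∈ Δ p.1)) k := by
  classical
  set φ : Fq →+* Polynomial Fqm := (Polynomial.C : Fqm →+* Polynomial Fqm).comp
    (algebraMap Fq Fqm) with hφ
  have hφdeg : ∀ x : Fq, (φ x).natDegree = 0 := fun x => Polynomial.natDegree_C _
  constructor
  · -- Part 1: the global code is non-catastrophic.
    obtain ⟨B, hAB⟩ := exists_right_inv A hA1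
    set MF : Matrix (Fin g × Fin r) (Fin g × Fin (r + d - 1)) Fq :=
      Matrix.of fun p q => if p.1 = q.1 then A p.2 q.2 else 0 with hMF
    set NF : Matrix (Fin g × Fin (r + d - 1)) (Fin g × Fin r) Fq :=
      Matrix.of fun q p => if q.1 = p.1 then B q.2 p.2 else 0 with hNF
    have hkey : ∀ (b b' : Fin g) (i : Fin r) (i' : Fin r),
        (MF * NF) (b, i) (b', i') = if b = b' then (A * B) i i' else 0 := by
      intro b b' i i'
      rw [Matrix.mul_apply, Fintype.sum_prod_type]
      have hterm : ∀ a : Fin g, (∑ j, MF (b, i) (a, j) * NF (a, j) (b', i')) =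
          if b = a ∧ a = b' then (A * B) i i' else 0 := by
        intro a
        by_cases h1 : b = a
        · by_cases h2 : a = b'
          · simp [hMF, hNF, h1, h2, Matrix.mul_apply]
          · simp [hMF, hNF, h1, h2]
        · simp [hMF, hNF, h1]
      rw [Finset.sum_congr rfl fun a _ => hterm a]
      by_cases hb : b = b'
      · subst hb
        rw [Finset.sum_eq_single b (fun a _ ha => by simp [Ne.symm ha])
          (fun h => absurd (Finset.mem_univ b) h)]
        simp
      · rw [if_neg hb]
        apply Finset.sum_eq_zero
        intro a _
        rw [if_neg]
        rintro ⟨rfl, rfl⟩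
        exact hb rfl
    have hprod : MF * NF = 1 := by
      ext ⟨b, i⟩ ⟨b', i'⟩
      rw [hkey, hAB]
      simp only [Matrix.one_apply, Prod.mk.injEq]
      by_cases hb : b = b' <;> by_cases hi : i = i' <;> simp [hb, hi]
    have hdiag : diagMap (Fqm := Fqm) Fq g A = MF.map φ := by
      funext p q
      by_cases h : p.1 = q.1 <;> simp [diagMap, hMF, Matrix.map_apply, h, hφ]
    have hMN : diagMap (Fqm := Fqm) Fq g A * NF.map φ = 1 := by
      rw [hdiag, ← Matrix.map_mul, hprod, Matrix.map_one φ (map_zero φ) (map_one φ)]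
    exact nonCat_map Cout _ (NF.map ⇑φ) hMN
      (fun i j => by rw [hdiag]; exact hφdeg _) (fun i j => hφdeg _) hnc
  · -- Part 2: restrictions are non-catastrophic.
    intro Δ hΔ
    set s : Finset (Fin g × Fin (r + d - 1)) :=
      Finset.univ.filter fun p : Fin g × Fin (r + d - 1) => p.2 ∈ Δ p.1 with hs
    -- local right inverses
    have hBa : ∀ a : Fin g, ∃ Ba : Matrix {j // j ∈ Δ a} (Fin r) Fq,
        (Matrix.of fun i (j : {j // j ∈ Δ a}) => A i j.1) * Ba = 1 := by
      intro a
      apply exists_right_inv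
      rw [Fintype.linearIndependent_iff]
      intro u hu i
      by_contra hui
      have hu0 : u ≠ 0 := fun h0 => hui (by rw [h0]; rfl)
      have hvan : ∀ j ∈ Δ a, (u ᵥ* A) j = 0 := by
        intro j hj
        have := congrFun hu ⟨j, hj⟩
        simpa [Finset.sum_apply, Matrix.vecMul, dotProduct] using this
      have hle : hWt (u ᵥ* A) ≤ ((Δ a)ᶜ).card := by
        have hinj : Nat.card {j // (u ᵥ* A) j ≠ 0} ≤ Nat.card ((Δ a)ᶜ : Finset _) := by
          apply Nat.card_le_card_of_injective
            (fun j => (⟨j.1, Finset.mem_compl.mpr fun hin => j.2 (hvan j.1 hin)⟩ :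
              ((Δ a)ᶜ : Finset _)))
          intro x y hxy
          have h5 := congrArg Subtype.val hxy
          exact Subtype.ext h5
        calc hWt (u ᵥ* A) = Nat.card {j // (u ᵥ* A) j ≠ 0} := rfl
          _ ≤ Nat.card ((Δ a)ᶜ : Finset _) := hinj
          _ = ((Δ a)ᶜ).card := Nat.card_eq_finsetCard _
      have hcc : ((Δ a)ᶜ).card = (r + d - 1) - (Δ a).card := by
        simp [Finset.card_compl]
      have hΔa := hΔ a
      have hd2 := hA2 u hu0
      omega
    choose Ba hBa using hBa
    set B' : Fin g → Matrix (Fin (r + d - 1)) (Fin r) Fq :=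
      fun a => Matrix.of fun j i => if h : j ∈ Δ a then Ba a ⟨j, h⟩ i else 0 with hB'
    have hsum : ∀ (a : Fin g) (i i' : Fin r),
        ∑ j, A i j * B' a j i' = if i = i' then 1 else 0 := by
      intro a i i'
      calc ∑ j, A i j * B' a j i' = ∑ j ∈ Δ a, A i j * B' a j i' := by
            symm
            apply Finset.sum_subset (Finset.subset_univ _)
            intro j _ hj
            simp [hB', dif_neg hj]
        _ = ∑ j : {j // j ∈ Δ a}, A i j.1 * B' a j.1 i' := (Finset.sum_coe_sort _ _).symm
        _ = ∑ j : {j // j ∈ Δ a}, (Matrix.of fun i (j : {j // j ∈ Δ a}) => A i j.1) i j *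
              Ba a j i' := by
            apply Finset.sum_congr rfl
            intro j _
            simp [hB']
        _ = ((Matrix.of fun i (j : {j // j ∈ Δ a}) => A i j.1) * Ba a) i i' :=
            (Matrix.mul_apply).symm
        _ = if i = i' then 1 else 0 := by rw [hBa a, Matrix.one_apply]
    set MF : Matrix (Fin g × Fin r) {x // x ∈ s} Fq :=
      Matrix.of fun p q => if p.1 = q.1.1 then A p.2 q.1.2 else 0 with hMF
    set NF : Matrix {x // x ∈ s} (Fin g × Fin r) Fq :=
      Matrix.of fun q p => if q.1.1 = p.1 then B' q.1.1 q.1.2 p.2 else 0 with hNF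
    have hprod : MF * NF = 1 := by
      ext ⟨b, i⟩ ⟨b', i'⟩
      rw [Matrix.mul_apply]
      have step1 : ∑ q : {x // x ∈ s}, MF (b, i) q * NF q (b', i') =
          ∑ x ∈ s, (if b = x.1 then A i x.2 else 0) *
            (if x.1 = b' then B' x.1 x.2 i' else 0) :=
        Finset.sum_coe_sort s fun x => (if b = x.1 then A i x.2 else 0) *
          (if x.1 = b' then B' x.1 x.2 i' else 0)
      rw [step1]
      have step2 : ∑ x ∈ s, (if b = x.1 then A i x.2 else 0) *
            (if x.1 = b' then B' x.1 x.2 i' else 0) =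
          ∑ x : Fin g × Fin (r + d - 1), (if b = x.1 then A i x.2 else 0) *
            (if x.1 = b' then B' x.1 x.2 i' else 0) := by
        apply Finset.sum_subset (Finset.subset_univ s)
        intro x _ hx
        have hx' : x.2 ∉ Δ x.1 := by simpa [hs, Finset.mem_filter] using hx
        simp [hB', dif_neg hx']
      rw [step2, Fintype.sum_prod_type]
      have hterm : ∀ a : Fin g, (∑ j, (if b = a then A i j else 0) *
          (if a = b' then B' a j i' else 0)) =
          if b = a ∧ a = b' then ∑ j, A i j * B' a j i' else 0 := by
        intro a
        by_cases h1 : b = a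
        · by_cases h2 : a = b'
          · simp [h1, h2]
          · simp [h1, h2]
        · simp [h1]
      rw [Finset.sum_congr rfl fun a _ => hterm a]
      by_cases hb : b = b'
      · subst hb
        rw [Finset.sum_eq_single b (fun a _ ha => by simp [Ne.symm ha])
          (fun h => absurd (Finset.mem_univ b) h)]
        simp [hsum b i i', Matrix.one_apply, Prod.mk.injEq]
      · rw [Matrix.one_apply, if_neg (by simp [Prod.mk.injEq, hb])]
        apply Finset.sum_eq_zero
        intro a _
        rw [if_neg]
        rintro ⟨rfl, rfl⟩
        exact hb rfl
    set M' : Matrix (Fin g × Fin r) {x // x ∈ s} (Polynomial Fqm) :=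
      Matrix.of fun p q => diagMap (Fqm := Fqm) Fq g A p q.1 with hM'
    have hM'eq : M' = MF.map φ := by
      funext p q
      by_cases h : p.1 = q.1.1 <;> simp [hM', hMF, diagMap, Matrix.map_apply, h, hφ]
    have hMN : M' * NF.map φ = 1 := by
      rw [hM'eq, ← Matrix.map_mul, hprod, Matrix.map_one φ (map_zero φ) (map_one φ)]
    have hres : restrictCode (globCode Fq Cout A) s = Cout.map (Matrix.vecMulLinear M') := by
      have hcomp : (LinearMap.funLeft (Polynomial Fqm) (Polynomial Fqm)
            (Subtype.val : {x // x ∈ s} → Fin g × Fin (r + d - 1))).comp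
          (Matrix.vecMulLinear (diagMap (Fqm := Fqm) Fq g A)) = Matrix.vecMulLinear M' :=
        LinearMap.ext fun u => funext fun q => rfl
      show Submodule.map _ (Submodule.map _ Cout) = _
      rw [← Submodule.map_comp, hcomp]
    rw [hres]
    exact nonCat_map Cout M' (NF.map ⇑φ) hMN
      (fun p q => by rw [hM'eq]; exact hφdeg _) (fun q p => hφdeg _) hnc

end LRCC
end
end

section
/- Let C ⊆ F[D]^n be an (n,k,r,∂) locally repairable convolutional code with local groups Γ_1,...,Γ_g. Let Δ_i ⊆ Γ_i be subsets with |Γ_i \ Δ_i| ≤ ∂−1 for i = 1,...,g, and set Δ = Δ_1 ∪ ... ∪ Δ_g and N = |Δ|. Then the restricted code C_Δ ⊆ F[D]^N is a free F[D]-submodule of rank k, i.e., an (N,k) convolutional code. Moreover, if G(D) = Σ_{j=0}^{μ} G_j D^j is a reduced generator matrix of C such that G_0 ∈ F^{k×n} has rank k, then the restricted matrix (G_0)_Δ ∈ F^{k×N} also has rank k. -/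
open Polynomial Matrix Finset

noncomputable section

namespace LRCC

variable {F : Type*} [Field F] {ι : Type*} [Fintype ι] {k : ℕ}

/-- Key lemma: if a codeword's `j`-th coefficient vanishes on `Δ = ∪ Δ a`, it
vanishes everywhere. -/
lemma key_coeff_zero {F : Type*} [Field F] {n k r d g : ℕ}
    (C : Submodule (Polynomial F) (Fin n → Polynomial F))
    (Γ : Fin g → Finset (Fin n)) (hC : IsLRCC C k r d Γ)
    (Δ : Fin g → Finset (Fin n)) (hsub : ∀ a, Δ a ⊆ Γ a)
    (hcard : ∀ a, (Γ a \ Δ a).card ≤ d - 1)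
    (v : Fin n → Polynomial F) (hv : v ∈ C) (j : ℕ)
    (h0 : ∀ x ∈ Finset.univ.biUnion Δ, (v x).coeff j = 0) :
    ∀ x, (v x).coeff j = 0 := by
  intro x
  obtain ⟨a, ha⟩ := hC.2.1 x
  set w : {y // y ∈ Γ a} → F := fun y => (v y.1).coeff j with hw
  have hmem : w ∈ assocBlockCode (restrictCode C (Γ a)) := by
    exact ⟨fun y => v y.1, ⟨v, hv, rfl⟩, j, fun i => rfl⟩
  have hsupp : ∀ y : {y // y ∈ Γ a}, w y ≠ 0 → y.1 ∈ Γ a \ Δ a := by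
    intro y hy
    refine Finset.mem_sdiff.2 ⟨y.2, fun hyd => hy (h0 y.1 ?_)⟩
    exact Finset.mem_biUnion.2 ⟨a, Finset.mem_univ a, hyd⟩
  by_cases hz : w = 0
  · exact congrFun hz ⟨x, ha⟩
  · exfalso
    have hd : d ≤ hWt w := hC.2.2.2 a w hmem hz
    have hle : hWt w ≤ (Γ a \ Δ a).card := by
      rw [hWt, ← Nat.card_eq_finsetCard (Γ a \ Δ a)]
      exact Nat.card_le_card_of_injective
        (fun y => (⟨y.1.1, hsupp y.1 y.2⟩ : {z // z ∈ Γ a \ Δ a}))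
        (fun y₁ y₂ h => by
          apply Subtype.ext; apply Subtype.ext
          simpa using congrArg Subtype.val h)
    have hpos : 0 < hWt w := by
      obtain ⟨y, hy⟩ := Function.ne_iff.1 hz
      have : Nonempty {y // w y ≠ 0} := ⟨⟨y, hy⟩⟩
      exact Nat.card_pos
    have := hcard a
    omega

/-- If every coefficient of a codeword vanishes on `Δ`, the codeword is zero. -/
lemma key_zero {F : Type*} [Field F] {n k r d g : ℕ}
    (C : Submodule (Polynomial F) (Fin n → Polynomial F))
    (Γ : Fin g → Finset (Fin n)) (hC : IsLRCC C k r d Γ)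
    (Δ : Fin g → Finset (Fin n)) (hsub : ∀ a, Δ a ⊆ Γ a)
    (hcard : ∀ a, (Γ a \ Δ a).card ≤ d - 1)
    (v : Fin n → Polynomial F) (hv : v ∈ C)
    (h0 : ∀ x ∈ Finset.univ.biUnion Δ, v x = 0) : v = 0 := by
  funext x
  apply Polynomial.ext
  intro j
  simp only [Pi.zero_apply, Polynomial.coeff_zero]
  exact key_coeff_zero C Γ hC Δ hsub hcard v hv j
    (fun y hy => by rw [h0 y hy, Polynomial.coeff_zero]) x

theorem statement8 {F : Type*} [Field F] [Fintype F]
    {n k r d g : ℕ}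
    (C : Submodule (Polynomial F) (Fin n → Polynomial F))
    (Γ : Fin g → Finset (Fin n)) (hC : IsLRCC C k r d Γ)
    (Δ : Fin g → Finset (Fin n)) (hsub : ∀ a, Δ a ⊆ Γ a)
    (hcard : ∀ a, (Γ a \ Δ a).card ≤ d - 1) :
    IsConvCode (restrictCode C (Finset.univ.biUnion Δ)) k ∧
    ∀ G : Matrix (Fin k) (Fin n) (Polynomial F),
      IsRedGenMat C G → (coeffMat G 0).rank = k →
        (Matrix.of fun i (x : {x // x ∈ Finset.univ.biUnion Δ}) =>
          coeffMat G 0 i x.1).rank = k := by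
  set Δu := Finset.univ.biUnion Δ with hΔu
  constructor
  · obtain ⟨G, hGli, hGspan⟩ := hC.1
    refine ⟨Matrix.of fun i (x : {x // x ∈ Δu}) => G i x.1, ?_, ?_⟩
    · rw [Fintype.linearIndependent_iff]
      intro c hc
      set v : Fin n → Polynomial F := ∑ i, c i • G i with hv
      have hvC : v ∈ C := by
        rw [hGspan]
        exact Submodule.sum_mem _ fun i _ =>
          Submodule.smul_mem _ _ (Submodule.subset_span ⟨i, rfl⟩)
      have hvz : ∀ x ∈ Δu, v x = 0 := by
        intro x hx
        have := congrFun hc ⟨x, hx⟩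
        simpa [hv, Finset.sum_apply] using this
      have hv0 : v = 0 := key_zero C Γ hC Δ hsub hcard v hvC hvz
      exact (Fintype.linearIndependent_iff.1 hGli) c hv0
    · rw [restrictCode, hGspan, Submodule.map_span, ← Set.range_comp]
      rfl
  · intro G hG hrk
    have hrows : ∀ i, G i ∈ C := by
      intro i
      rw [hG.1.2]
      exact Submodule.subset_span ⟨i, rfl⟩
    have hli : LinearIndependent F
        (Matrix.of fun i (x : {x // x ∈ Δu}) => coeffMat G 0 i x.1) := by
      refine Fintype.linearIndependent_iff.2 ?_
      intro c hc
      set v : Fin n → Polynomial F := ∑ i, Polynomial.C (c i) • G i with hv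
      have hvC : v ∈ C := Submodule.sum_mem _ fun i _ =>
        Submodule.smul_mem _ _ (hrows i)
      have hc0 : ∀ x ∈ Δu, (v x).coeff 0 = 0 := by
        intro x hx
        have := congrFun hc ⟨x, hx⟩
        simpa [hv, Finset.sum_apply, Polynomial.coeff_smul, coeffMat,
          smul_eq_mul] using this
      have hall : ∀ x, (v x).coeff 0 = 0 :=
        key_coeff_zero C Γ hC Δ hsub hcard v hvC 0 hc0
      have hsum0 : ∑ i, c i • (coeffMat G 0) i = 0 := by
        funext x
        have := hall x
        simpa [hv, Finset.sum_apply, Polynomial.coeff_smul, coeffMat,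
          smul_eq_mul] using this
      have hli0 : LinearIndependent F fun i => (coeffMat G 0) i := by
        rw [linearIndependent_iff_card_eq_finrank_span, Set.finrank,
          Fintype.card_fin]
        have hr := Matrix.rank_eq_finrank_span_row (coeffMat G 0)
        rw [hrk] at hr
        exact hr
      exact (Fintype.linearIndependent_iff.1 hli0) c hsum0
    have h := hli.rank_matrix.trans (Fintype.card_fin k)
    convert h using 2 <;> exact Subsingleton.elim _ _

end LRCC
end
end

section
/- In Construction 1, the global code has the same degree and memory as the outer code: δ(C_glob) = δ(C_out) and μ(C_glob) = μ(C_out). -/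
open Polynomial Matrix Finset

noncomputable section

namespace LRCC

variable {F : Type*} [Field F] {ι : Type*} [Fintype ι] {k : ℕ}

section MainAux

open Polynomial Submodule

variable [DecidableEq ι]

private lemma natDeg_lt_of_coeff_zero {p : Polynomial F} {n : ℕ} (h1 : p.natDegree ≤ n)
    (h2 : p.coeff n = 0) (hp : p ≠ 0) : p.natDegree < n := by
  rcases lt_or_eq_of_le h1 with h | h
  · exact h
  · exfalso
    rw [← h, coeff_natDegree] at h2
    exact hp (leadingCoeff_eq_zero.mp h2)

lemma natDegree_le_rowDeg (G : Matrix (Fin k) ι (Polynomial F)) (i : Fin k) (a : ι) :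
    (G i a).natDegree ≤ rowDeg G i := by
  unfold rowDeg
  exact Finset.le_sup (f := fun j => (G i j).natDegree) (Finset.mem_univ a)

/-- The leading-row-coefficient matrix of a reduced generator matrix has
`F`-linearly independent rows. -/
lemma lead_linearIndependent {Cd : Submodule (Polynomial F) (ι → Polynomial F)}
    {G : Matrix (Fin k) ι (Polynomial F)} (hG : IsRedGenMat Cd G) :
    LinearIndependent F (fun i (a : ι) => (G i a).coeff (rowDeg G i)) := by
  classical
  set e : Fin k → ℕ := rowDeg G with he
  rw [Fintype.linearIndependent_iff]
  intro c hc
  by_contra hne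
  push_neg at hne
  obtain ⟨i1, hi1⟩ := hne
  have hsne : (Finset.univ.filter fun i => c i ≠ 0).Nonempty := ⟨i1, by simp [hi1]⟩
  obtain ⟨i0, hi0mem, hi0⟩ :=
    Finset.exists_mem_eq_sup (Finset.univ.filter fun i => c i ≠ 0) hsne e
  have hc0 : c i0 ≠ 0 := by simpa using (Finset.mem_filter.mp hi0mem).2
  have hle : ∀ i, c i ≠ 0 → e i ≤ e i0 := by
    intro i hi
    rw [← hi0]
    exact Finset.le_sup (by simp [hi])
  set q : Fin k → Polynomial F := fun i => Polynomial.C (c i) * X ^ (e i0 - e i) with hq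
  set w : ι → Polynomial F := fun a => ∑ i, q i * G i a with hw
  have hcc : ∀ a, ∑ i, c i * (G i a).coeff (e i) = 0 := by
    intro a
    have h' := congrFun hc a
    simpa [Finset.sum_apply] using h'
  have hwc : ∀ a, (w a).coeff (e i0) = 0 := by
    intro a
    have hterm : ∀ i, (q i * G i a).coeff (e i0) = c i * (G i a).coeff (e i) := by
      intro i
      by_cases hci : c i = 0
      · simp [hq, hci]
      · have hei := hle i hci
        rw [hq, mul_assoc, coeff_C_mul]
        congr 1
        have hX := coeff_X_pow_mul (G i a) (e i0 - e i) (e i)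
        rw [Nat.add_sub_cancel' hei] at hX
        exact hX
    calc (w a).coeff (e i0) = ∑ i, (q i * G i a).coeff (e i0) := by
          rw [hw]; exact finset_sum_coeff _ _ _
      _ = ∑ i, c i * (G i a).coeff (e i) := Finset.sum_congr rfl fun i _ => hterm i
      _ = 0 := hcc a
  have hwd : ∀ a, (w a).natDegree ≤ e i0 := by
    intro a
    apply natDegree_sum_le_of_forall_le
    intro i _
    by_cases hci : c i = 0
    · simp [hq, hci]
    · have hei := hle i hci
      calc (q i * G i a).natDegree ≤ (q i).natDegree + (G i a).natDegree := natDegree_mul_le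
        _ ≤ (e i0 - e i) + e i := by
            apply add_le_add
            · exact (natDegree_C_mul_le _ _).trans (natDegree_X_pow _).le
            · exact natDegree_le_rowDeg G i a
        _ = e i0 := Nat.sub_add_cancel hei
  have hwsum : w = ∑ i, q i • (fun a => G i a) := by
    funext a
    simp [hw, Finset.sum_apply]
  have hwne : w ≠ 0 := by
    intro h0
    have hz : ∀ i, q i = 0 := by
      apply Fintype.linearIndependent_iff.mp hG.1.1
      rw [← hwsum, h0]
    have := hz i0
    rw [hq] at this
    simp only [Nat.sub_self, pow_zero, mul_one] at this
    exact hc0 (by simpa using this)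
  obtain ⟨a0, ha0⟩ : ∃ a, w a ≠ 0 := by
    by_contra h
    push_neg at h
    exact hwne (funext h)
  have he0pos : 0 < e i0 :=
    Nat.lt_of_le_of_lt (Nat.zero_le _) (natDeg_lt_of_coeff_zero (hwd a0) (hwc a0) ha0)
  have hlt : ∀ a, (w a).natDegree < e i0 := by
    intro a
    by_cases h : w a = 0
    · rw [h]; simpa using he0pos
    · exact natDeg_lt_of_coeff_zero (hwd a) (hwc a) h
  set G2 := Matrix.updateRow G i0 w with hG2
  have hdecomp : ∀ b : Fin k → Polynomial F,
      ∑ i, b i • G2 i = ∑ i, ((if i = i0 then 0 else b i) + b i0 * q i) • G i := by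
    intro b
    have h1 : ∑ i, b i • G2 i
        = b i0 • w + ∑ i ∈ Finset.univ.erase i0, b i • G i := by
      rw [← Finset.add_sum_erase _ _ (Finset.mem_univ i0)]
      congr 1
      · simp only [hG2, Matrix.updateRow_self]
      · refine Finset.sum_congr rfl fun i hi => ?_
        simp only [hG2, Matrix.updateRow_ne (Finset.ne_of_mem_erase hi)]
    have h2 : b i0 • w = ∑ i, (b i0 * q i) • G i := by
      funext x
      simp [hwsum, Finset.sum_apply, Finset.mul_sum, mul_assoc]
    have h3 : ∑ i ∈ Finset.univ.erase i0, b i • G i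
        = ∑ i, (if i = i0 then 0 else b i) • G i := by
      rw [← Finset.add_sum_erase _ _ (Finset.mem_univ i0)]
      rw [if_pos rfl, zero_smul, zero_add]
      refine Finset.sum_congr rfl fun i hi => ?_
      rw [if_neg (Finset.ne_of_mem_erase hi)]
    rw [h1, h2, h3, ← Finset.sum_add_distrib]
    refine Finset.sum_congr rfl fun i _ => ?_
    rw [← add_smul, add_comm]
  have hq0 : q i0 = C (c i0) := by
    rw [hq]; simp [Nat.sub_self]
  have hind2 : LinearIndependent (Polynomial F) (fun i => G2 i) := by
    rw [Fintype.linearIndependent_iff]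
    intro b hb
    rw [hdecomp] at hb
    have hz := Fintype.linearIndependent_iff.mp hG.1.1 _ hb
    have hb0 : b i0 = 0 := by
      have h' := hz i0
      rw [if_pos rfl, zero_add, hq0] at h'
      rcases mul_eq_zero.mp h' with h'' | h''
      · exact h''
      · exact absurd (by simpa using h'') hc0
    intro i
    by_cases hii : i = i0
    · rw [hii]; exact hb0
    · have h' := hz i
      rw [if_neg hii, hb0, zero_mul, add_zero] at h'
      exact h'
  have hspan2 : Submodule.span (Polynomial F) (Set.range fun i => G2 i)
      = Submodule.span (Polynomial F) (Set.range fun i => G i) := by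
    apply le_antisymm <;> rw [Submodule.span_le] <;> rintro x ⟨i, rfl⟩
    · by_cases hii : i = i0
      · subst hii
        simp only [hG2, Matrix.updateRow_self, hwsum]
        exact Submodule.sum_mem _ fun i _ =>
          Submodule.smul_mem _ _ (Submodule.subset_span ⟨i, rfl⟩)
      · simp only [hG2, Matrix.updateRow_ne hii]
        exact Submodule.subset_span ⟨i, rfl⟩
    · by_cases hii : i = i0
      · have hmm : (fun i' => G i') i = G i0 := by rw [hii]
        rw [hmm]
        have hkey : (G i0 : ι → Polynomial F)
            = Polynomial.C (c i0)⁻¹ • (G2 i0 - ∑ i ∈ Finset.univ.erase i0, q i • G2 i) := by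
          have hG2i0 : G2 i0 = w := by simp only [hG2, Matrix.updateRow_self]
          have herase : ∑ i ∈ Finset.univ.erase i0, q i • G2 i
              = ∑ i ∈ Finset.univ.erase i0, q i • (fun a => G i a) := by
            refine Finset.sum_congr rfl fun i hi => ?_
            simp only [hG2, Matrix.updateRow_ne (Finset.ne_of_mem_erase hi)]
          have hw' : w = q i0 • (fun a => G i0 a)
              + ∑ i ∈ Finset.univ.erase i0, q i • (fun a => G i a) := by
            rw [hwsum, ← Finset.add_sum_erase _ _ (Finset.mem_univ i0)]
          rw [hG2i0, herase, hw']
          rw [add_sub_cancel_right, hq0, smul_smul, ← C_mul,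
            inv_mul_cancel₀ hc0, C_1, one_smul]
        rw [hkey]
        refine Submodule.smul_mem _ _ (Submodule.sub_mem _
          (Submodule.subset_span ⟨i0, rfl⟩)
          (Submodule.sum_mem _ fun i _ =>
            Submodule.smul_mem _ _ (Submodule.subset_span ⟨i, rfl⟩)))
      · exact Submodule.subset_span ⟨i, by simp only [hG2, Matrix.updateRow_ne hii]⟩
  have hgen2 : IsGenMat Cd G2 := ⟨hind2, hG.1.2.trans hspan2.symm⟩
  have hlesum := hG.2 G2 hgen2
  have hstrict : ∑ i, rowDeg G2 i < ∑ i, rowDeg G i := by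
    apply Finset.sum_lt_sum
    · intro i _
      by_cases hii : i = i0
      · subst hii
        apply le_of_lt
        have hbot : (⊥ : ℕ) < rowDeg G i := by simpa using he0pos
        unfold rowDeg at hbot ⊢
        rw [Finset.sup_lt_iff hbot]
        intro a _
        simp only [hG2, Matrix.updateRow_self]
        exact hlt a
      · apply le_of_eq
        unfold rowDeg
        refine Finset.sup_congr rfl fun a _ => ?_
        simp only [hG2, Matrix.updateRow_ne hii]
    · refine ⟨i0, Finset.mem_univ i0, ?_⟩
      have hbot : (⊥ : ℕ) < rowDeg G i0 := by simpa using he0pos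
      unfold rowDeg at hbot ⊢
      rw [Finset.sup_lt_iff hbot]
      intro a _
      simp only [hG2, Matrix.updateRow_self]
      exact hlt a
  exact absurd hlesum (not_le.mpr hstrict)

/-- The family `{ D^t · g_i : t + e_i ≤ j }` spanning codewords of degree at most `j`. -/
def Sfam (G : Matrix (Fin k) ι (Polynomial F)) (j : ℕ) :
    (Σ i : Fin k, Fin (j + 1 - rowDeg G i)) → ι → Polynomial F :=
  fun p a => X ^ (p.2 : ℕ) * G p.1 a

lemma sfam_linearIndependent {Cd : Submodule (Polynomial F) (ι → Polynomial F)}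
    {G : Matrix (Fin k) ι (Polynomial F)} (hG : IsGenMat Cd G) (j : ℕ) :
    LinearIndependent F (Sfam G j) := by
  rw [Fintype.linearIndependent_iff]
  intro c hc
  set u : Fin k → Polynomial F :=
    fun i => ∑ t : Fin (j + 1 - rowDeg G i), C (c ⟨i, t⟩) * X ^ (t : ℕ) with hu
  have hsum : ∑ i, u i • (fun a => G i a) = (0 : ι → Polynomial F) := by
    funext a
    have h' := congrFun hc a
    rw [Finset.sum_apply] at h'
    rw [← Finset.univ_sigma_univ, Finset.sum_sigma] at h'
    rw [Finset.sum_apply]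
    rw [show (0 : ι → Polynomial F) a = 0 from rfl] at h' ⊢
    rw [← h']
    refine Finset.sum_congr rfl fun i _ => ?_
    simp only [Pi.smul_apply, smul_eq_mul, hu, Sfam, Finset.sum_mul, smul_eq_C_mul]
    exact Finset.sum_congr rfl fun t _ => by ring
  have hz := Fintype.linearIndependent_iff.mp hG.1 u hsum
  rintro ⟨i, t⟩
  have hcoeff := congrArg (fun p => Polynomial.coeff p (t : ℕ)) (hz i)
  simp only [coeff_zero] at hcoeff
  rw [hu] at hcoeff
  rw [finset_sum_coeff] at hcoeff
  rw [Finset.sum_eq_single t] at hcoeff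
  · simpa [coeff_C_mul, coeff_X_pow] using hcoeff
  · intro t' _ hne
    have : ((t : ℕ) : ℕ) ≠ (t' : ℕ) := fun h => hne (Fin.val_injective h).symm
    simp [coeff_C_mul, coeff_X_pow, this]
  · simp

/-- Predictable-degree consequence: a codeword of degree at most `j` lies in the
`F`-span of the family `Sfam G j`, for `G` reduced. -/
lemma mem_span_sfam {Cd : Submodule (Polynomial F) (ι → Polynomial F)}
    {G : Matrix (Fin k) ι (Polynomial F)} (hG : IsRedGenMat Cd G)
    {j : ℕ} {v : ι → Polynomial F} (hv : v ∈ Cd) (hdeg : ∀ a, (v a).natDegree ≤ j) :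
    v ∈ Submodule.span F (Set.range (Sfam G j)) := by
  classical
  have hlead := lead_linearIndependent hG
  have hv' : v ∈ Submodule.span (Polynomial F) (Set.range fun i => G i) := hG.1.2 ▸ hv
  obtain ⟨u, hu⟩ := (mem_span_range_iff_exists_fun _).mp hv'
  have hkey : ∀ i, u i ≠ 0 → (u i).natDegree + rowDeg G i ≤ j := by
    intro i1 hi1
    set s := Finset.univ.filter (fun i => u i ≠ 0) with hs
    have hsne : s.Nonempty := ⟨i1, by simp [hs, hi1]⟩
    set T := s.sup (fun i => (u i).natDegree + rowDeg G i) with hT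
    obtain ⟨a1, ha1⟩ : ∃ a, (v a).coeff T ≠ 0 := by
      set cc : Fin k → F := fun i =>
        if (u i).natDegree + rowDeg G i = T ∧ u i ≠ 0 then (u i).leadingCoeff else 0 with hcc
      obtain ⟨im, himmem, him⟩ :=
        Finset.exists_mem_eq_sup s hsne (fun i => (u i).natDegree + rowDeg G i)
      have himne : u im ≠ 0 := by
        have := Finset.mem_filter.mp himmem
        simpa [hs] using this.2
      have hTim : (u im).natDegree + rowDeg G im = T := (hT.trans him).symm
      have hccim : cc im ≠ 0 := by
        simp only [hcc]
        rw [if_pos ⟨hTim, himne⟩]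
        exact leadingCoeff_ne_zero.mpr himne
      by_contra hno
      push_neg at hno
      apply hccim
      have hterm : ∀ a i, (u i * G i a).coeff T = cc i * (G i a).coeff (rowDeg G i) := by
        intro a i
        by_cases hui : u i = 0
        · simp [hcc, hui]
        · by_cases hTi : (u i).natDegree + rowDeg G i = T
          · rw [← hTi, coeff_mul_add_eq_of_natDegree_le le_rfl (natDegree_le_rowDeg G i a)]
            have hcci : cc i = (u i).leadingCoeff := by
              simp only [hcc]
              rw [if_pos ⟨hTi, hui⟩]
            rw [hcci]
            rfl
          · have hmem : i ∈ s := by simp [hs, hui]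
            have hlt : (u i).natDegree + rowDeg G i < T := by
              refine lt_of_le_of_ne ?_ hTi
              rw [hT]
              exact Finset.le_sup (f := fun i => (u i).natDegree + rowDeg G i) hmem
            rw [coeff_eq_zero_of_natDegree_lt
              (lt_of_le_of_lt (natDegree_mul_le.trans
                (add_le_add le_rfl (natDegree_le_rowDeg G i a))) hlt)]
            have hcci : cc i = 0 := by
              simp only [hcc]
              rw [if_neg (fun h => hTi h.1)]
            rw [hcci, zero_mul]
      have hfun : ∑ i, cc i • (fun a => (G i a).coeff (rowDeg G i)) = 0 := by
        funext a
        rw [Finset.sum_apply]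
        have h1 : (v a).coeff T = ∑ i, (u i * G i a).coeff T := by
          rw [← hu, Finset.sum_apply, finset_sum_coeff]
          exact Finset.sum_congr rfl fun b _ => rfl
        calc ∑ i, (cc i • fun a' => (G i a').coeff (rowDeg G i)) a
            = ∑ i, (u i * G i a).coeff T := by
              refine Finset.sum_congr rfl fun i _ => ?_
              rw [hterm a i]
              rfl
          _ = (v a).coeff T := h1.symm
          _ = 0 := hno a
      exact Fintype.linearIndependent_iff.mp hlead cc hfun im
    have hTj : T ≤ j := le_trans (le_natDegree_of_ne_zero ha1) (hdeg a1)
    have hi1T : (u i1).natDegree + rowDeg G i1 ≤ T := by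
      rw [hT]
      exact Finset.le_sup (f := fun i => (u i).natDegree + rowDeg G i) (by simp [hs, hi1])
    exact le_trans hi1T hTj
  rw [← hu]
  apply Submodule.sum_mem
  intro i _
  by_cases hui : u i = 0
  · rw [hui, zero_smul]
    exact Submodule.zero_mem _
  · have hd : (u i).natDegree < j + 1 - rowDeg G i := by
      have := hkey i hui
      omega
    have hexp : u i • (fun a => G i a)
        = ∑ t : Fin (j + 1 - rowDeg G i), ((u i).coeff (t : ℕ)) • Sfam G j ⟨i, t⟩ := by
      funext a
      rw [Finset.sum_apply]
      simp only [Pi.smul_apply, smul_eq_mul, Sfam, smul_eq_C_mul]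
      conv_lhs => rw [as_sum_range' (u i) _ hd]
      rw [Finset.sum_mul, ← Fin.sum_univ_eq_sum_range
        (fun t => (monomial t (coeff (u i) t) : Polynomial F) * G i a)]
      refine Finset.sum_congr rfl fun t _ => ?_
      rw [← C_mul_X_pow_eq_monomial, mul_assoc]
    rw [hexp]
    exact Submodule.sum_mem _ fun t _ =>
      Submodule.smul_mem _ _ (Submodule.subset_span ⟨⟨i, t⟩, rfl⟩)

lemma span_sfam_le {Cd : Submodule (Polynomial F) (ι → Polynomial F)}
    {G G' : Matrix (Fin k) ι (Polynomial F)}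
    (hG : IsRedGenMat Cd G) (hG' : IsRedGenMat Cd G') (j : ℕ) :
    Submodule.span F (Set.range (Sfam G j)) ≤ Submodule.span F (Set.range (Sfam G' j)) := by
  rw [Submodule.span_le]
  rintro x ⟨⟨i, t⟩, rfl⟩
  have hmem : Sfam G j ⟨i, t⟩ ∈ Cd := by
    have hrw : Sfam G j ⟨i, t⟩ = (X ^ (t : ℕ) : Polynomial F) • (fun a => G i a) := by
      funext a
      simp [Sfam]
    rw [hrw, hG.1.2]
    exact Submodule.smul_mem _ _ (Submodule.subset_span ⟨i, rfl⟩)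
  refine mem_span_sfam hG' hmem fun a => ?_
  have ht : (t : ℕ) + rowDeg G i ≤ j := by
    have := t.2
    omega
  calc (X ^ (t : ℕ) * G i a).natDegree ≤ (t : ℕ) + (G i a).natDegree :=
        natDegree_mul_le.trans (add_le_add (natDegree_X_pow _).le le_rfl)
    _ ≤ (t : ℕ) + rowDeg G i := add_le_add le_rfl (natDegree_le_rowDeg G i a)
    _ ≤ j := ht

lemma sum_trunc_eq {Cd : Submodule (Polynomial F) (ι → Polynomial F)}
    {G G' : Matrix (Fin k) ι (Polynomial F)}
    (hG : IsRedGenMat Cd G) (hG' : IsRedGenMat Cd G') (j : ℕ) :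
    ∑ i, (j + 1 - rowDeg G i) = ∑ i, (j + 1 - rowDeg G' i) := by
  have hsp := le_antisymm (span_sfam_le hG hG' j) (span_sfam_le hG' hG j)
  have h1 := finrank_span_eq_card (sfam_linearIndependent hG.1 j)
  have h2 := finrank_span_eq_card (sfam_linearIndependent hG'.1 j)
  rw [hsp] at h1
  have := h1.symm.trans h2
  simpa [Fintype.card_sigma] using this

lemma sup_eq_of_trunc {k : ℕ} (e f : Fin k → ℕ)
    (h : ∀ j, ∑ i, (j + 1 - e i) = ∑ i, (j + 1 - f i)) :
    Finset.univ.sup e = Finset.univ.sup f := by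
  have hcount : ∀ j, (Finset.univ.filter fun i => e i ≤ j).card
      = (Finset.univ.filter fun i => f i ≤ j).card := by
    intro j
    induction j with
    | zero =>
      have hbase : ∀ g : Fin k → ℕ, ∑ i, (0 + 1 - g i)
          = (Finset.univ.filter fun i => g i ≤ 0).card := by
        intro g
        rw [Finset.card_filter]
        refine Finset.sum_congr rfl fun i _ => ?_
        split_ifs with h' <;> omega
      rw [← hbase e, ← hbase f]
      exact h 0
    | succ j ih =>
      have hstep : ∀ g : Fin k → ℕ, ∑ i, (j + 1 + 1 - g i)
          = ∑ i, (j + 1 - g i) + (Finset.univ.filter fun i => g i ≤ j + 1).card := by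
        intro g
        rw [Finset.card_filter, ← Finset.sum_add_distrib]
        refine Finset.sum_congr rfl fun i _ => ?_
        split_ifs with h' <;> omega
      have h1 := hstep e
      have h2 := hstep f
      have h3 := h (j + 1)
      have h4 := h j
      omega
  have hdir : ∀ (e f : Fin k → ℕ),
      (∀ j, (Finset.univ.filter fun i => e i ≤ j).card
        = (Finset.univ.filter fun i => f i ≤ j).card) →
      Finset.univ.sup e ≤ Finset.univ.sup f := by
    intro e f hc
    rw [Finset.sup_le_iff]
    intro i _
    have hf : (Finset.univ.filter fun i' => f i' ≤ Finset.univ.sup f) = Finset.univ :=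
      Finset.filter_true_of_mem fun i' _ => Finset.le_sup (Finset.mem_univ i')
    have hcard : (Finset.univ.filter fun i' => e i' ≤ Finset.univ.sup f).card
        = Fintype.card (Fin k) := by
      rw [hc, hf, Finset.card_univ]
    have huniv : (Finset.univ.filter fun i' => e i' ≤ Finset.univ.sup f) = Finset.univ :=
      Finset.eq_univ_of_card _ hcard
    have : i ∈ Finset.univ.filter fun i' => e i' ≤ Finset.univ.sup f := by
      rw [huniv]; exact Finset.mem_univ i
    exact (Finset.mem_filter.mp this).2
  exact le_antisymm (hdir e f hcount) (hdir f e fun j => (hcount j).symm)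

/-- The memory (maximal row degree) is the same for any two reduced generator
matrices of the same convolutional code. -/
lemma sup_rowDeg_eq {Cd : Submodule (Polynomial F) (ι → Polynomial F)}
    {G G' : Matrix (Fin k) ι (Polynomial F)}
    (hG : IsRedGenMat Cd G) (hG' : IsRedGenMat Cd G') :
    Finset.univ.sup (rowDeg G) = Finset.univ.sup (rowDeg G') :=
  sup_eq_of_trunc _ _ fun j => sum_trunc_eq hG hG' j

end MainAux

section TransferAux

open Polynomial Submodule

variable [DecidableEq ι] {κ : Type*} [Fintype κ] [DecidableEq κ]

lemma row_mul_eq_vecMul (G : Matrix (Fin k) ι (Polynomial F))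
    (M : Matrix ι κ (Polynomial F)) (i : Fin k) :
    (G * M) i = Matrix.vecMul (G i) M := by
  funext a
  simp [Matrix.mul_apply, Matrix.vecMul, dotProduct]

lemma vecMul_rightInv_cancel {M : Matrix ι κ (Polynomial F)} {N : Matrix κ ι (Polynomial F)}
    (hMN : M * N = 1) (v : ι → Polynomial F) :
    Matrix.vecMul (Matrix.vecMul v M) N = v := by
  rw [Matrix.vecMul_vecMul, hMN, Matrix.vecMul_one]

lemma vecMulLinear_injective {M : Matrix ι κ (Polynomial F)} {N : Matrix κ ι (Polynomial F)}
    (hMN : M * N = 1) :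
    Function.Injective (Matrix.vecMulLinear (R := Polynomial F) M) := by
  intro x y hxy
  have hx := vecMul_rightInv_cancel hMN x
  have hy := vecMul_rightInv_cancel hMN y
  rw [← hx, ← hy]
  simp only [Matrix.vecMulLinear_apply] at hxy
  rw [hxy]

lemma isGenMat_map {Cd : Submodule (Polynomial F) (ι → Polynomial F)}
    {G : Matrix (Fin k) ι (Polynomial F)} {M : Matrix ι κ (Polynomial F)}
    {N : Matrix κ ι (Polynomial F)} (hMN : M * N = 1) (h : IsGenMat Cd G) :
    IsGenMat (Cd.map (Matrix.vecMulLinear M)) (G * M) := by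
  have hrows : (fun i => (G * M) i) = (Matrix.vecMulLinear M) ∘ (fun i => G i) := by
    funext i
    rw [row_mul_eq_vecMul]
    rfl
  constructor
  · rw [hrows]
    exact h.1.map' (Matrix.vecMulLinear M)
      (LinearMap.ker_eq_bot.mpr (vecMulLinear_injective hMN))
  · rw [h.2, Submodule.map_span, ← Set.range_comp, ← hrows]

lemma exists_genmat_pullback {Cd : Submodule (Polynomial F) (ι → Polynomial F)}
    {Gg : Matrix (Fin k) κ (Polynomial F)} {M : Matrix ι κ (Polynomial F)}
    {N : Matrix κ ι (Polynomial F)} (hMN : M * N = 1)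
    (h : IsGenMat (Cd.map (Matrix.vecMulLinear M)) Gg) :
    ∃ Go : Matrix (Fin k) ι (Polynomial F), IsGenMat Cd Go ∧ Go * M = Gg := by
  have hmem : ∀ i, ∃ w, w ∈ Cd ∧ Matrix.vecMulLinear M w = Gg i := by
    intro i
    have : Gg i ∈ Cd.map (Matrix.vecMulLinear M) := by
      rw [h.2]
      exact Submodule.subset_span ⟨i, rfl⟩
    obtain ⟨w, hw1, hw2⟩ := Submodule.mem_map.mp this
    exact ⟨w, hw1, hw2⟩
  choose w hwC hwM using hmem
  refine ⟨Matrix.of w, ⟨?_, ?_⟩, ?_⟩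
  · rw [Fintype.linearIndependent_iff]
    intro c hc
    have h3 : ∀ i : Fin k, Matrix.vecMulLinear M (c i • Matrix.of w i) = c i • Gg i := by
      intro i
      rw [_root_.map_smul]
      congr 1
      exact hwM i
    have h2 := congrArg (Matrix.vecMulLinear M) hc
    rw [map_sum, map_zero] at h2
    have hc' : ∑ i, c i • Gg i = 0 :=
      (Finset.sum_congr rfl fun i _ => (h3 i).symm).trans h2
    exact Fintype.linearIndependent_iff.mp h.1 c hc'
  · have hinj := vecMulLinear_injective hMN
    apply Submodule.map_injective_of_injective hinj
    rw [Submodule.map_span, ← Set.range_comp]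
    have : (Matrix.vecMulLinear M) ∘ (fun i => (Matrix.of w) i) = fun i => Gg i := by
      funext i
      exact hwM i
    rw [this, ← h.2]
  · ext i a
    have : (Matrix.of w * M) i = Matrix.vecMul (w i) M := row_mul_eq_vecMul _ M i
    rw [this]
    have := hwM i
    simp only [Matrix.vecMulLinear_apply] at this
    rw [this]

lemma natDegree_vecMul_le (v : ι → Polynomial F) (M : Matrix ι κ (Polynomial F))
    (hM : ∀ x y, (M x y).natDegree = 0) (a : κ) :
    ((Matrix.vecMul v M) a).natDegree ≤ Finset.univ.sup fun x => (v x).natDegree := by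
  have hv : Matrix.vecMul v M a = ∑ x, v x * M x a := by
    simp [Matrix.vecMul, dotProduct]
  rw [hv]
  apply natDegree_sum_le_of_forall_le
  intro x _
  refine le_trans natDegree_mul_le ?_
  rw [hM x a, add_zero]
  exact Finset.le_sup (f := fun x => (v x).natDegree) (Finset.mem_univ x)

lemma sup_natDegree_vecMul_eq (v : ι → Polynomial F) {M : Matrix ι κ (Polynomial F)}
    {N : Matrix κ ι (Polynomial F)} (hMN : M * N = 1)
    (hM : ∀ x y, (M x y).natDegree = 0) (hN : ∀ x y, (N x y).natDegree = 0) :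
    (Finset.univ.sup fun a => ((Matrix.vecMul v M) a).natDegree)
      = Finset.univ.sup fun x => (v x).natDegree := by
  apply le_antisymm
  · exact Finset.sup_le fun a _ => natDegree_vecMul_le v M hM a
  · set u := Matrix.vecMul v M with hu
    have hv : v = Matrix.vecMul u N := (vecMul_rightInv_cancel hMN v).symm
    rw [hv]
    exact Finset.sup_le fun x _ => natDegree_vecMul_le u N hN x

lemma rowDeg_mul_rightInv (G : Matrix (Fin k) ι (Polynomial F))
    {M : Matrix ι κ (Polynomial F)} {N : Matrix κ ι (Polynomial F)} (hMN : M * N = 1)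
    (hM : ∀ x y, (M x y).natDegree = 0) (hN : ∀ x y, (N x y).natDegree = 0) (i : Fin k) :
    rowDeg (G * M) i = rowDeg G i := by
  unfold rowDeg
  have hfun : (fun j => ((G * M) i j).natDegree)
      = fun j => ((Matrix.vecMul (G i) M) j).natDegree := by
    funext j
    rw [row_mul_eq_vecMul]
  rw [hfun]
  exact sup_natDegree_vecMul_eq (G i) hMN hM hN

end TransferAux

section DiagAux

open Polynomial

variable (Fq : Type*) [Field Fq] {Fqm : Type*} [Field Fqm] [Algebra Fq Fqm]

lemma diagMap_natDegree {g r s : ℕ} (A : Matrix (Fin r) (Fin s) Fq)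
    (x : Fin g × Fin r) (y : Fin g × Fin s) :
    ((diagMap (Fqm := Fqm) Fq g A) x y).natDegree = 0 := by
  unfold diagMap
  split_ifs <;> simp

lemma diagMap_mul {g r s t : ℕ} (A : Matrix (Fin r) (Fin s) Fq)
    (B : Matrix (Fin s) (Fin t) Fq) :
    (diagMap (Fqm := Fqm) Fq g A * diagMap (Fqm := Fqm) Fq g B : Matrix _ _ (Polynomial Fqm)) = diagMap Fq g (A * B) := by
  refine Matrix.ext fun ⟨b, i⟩ ⟨b', i'⟩ => ?_
  rw [Matrix.mul_apply, Fintype.sum_prod_type]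
  rw [Finset.sum_eq_single b]
  · by_cases hbb : b = b'
    · subst hbb
      simp [diagMap, Matrix.mul_apply, map_sum]
    · simp [diagMap, hbb]
  · intro c _ hc
    simp [diagMap, Ne.symm hc]
  · simp

lemma diagMap_one {g r : ℕ} :
    diagMap (Fqm := Fqm) Fq g (1 : Matrix (Fin r) (Fin r) Fq) = 1 := by
  ext ⟨b, i⟩ ⟨b', i'⟩
  by_cases hbb : b = b' <;> by_cases hii : i = i' <;>
    simp [diagMap, Matrix.one_apply, Prod.ext_iff, hbb, hii]

lemma exists_right_inverse {r n : ℕ} (A : Matrix (Fin r) (Fin n) Fq)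
    (hA : LinearIndependent Fq (fun i => A i)) :
    ∃ B : Matrix (Fin n) (Fin r) Fq, A * B = 1 := by
  have hker : LinearMap.ker (Matrix.vecMulLinear (R := Fq) A) = ⊥ := by
    rw [LinearMap.ker_eq_bot']
    intro v hv
    have hsum : ∑ i, v i • A i = 0 := by
      have hv' : Matrix.vecMul v A = 0 := hv
      funext a
      have hva := congrFun hv' a
      simp only [Matrix.vecMul, dotProduct] at hva
      rw [Finset.sum_apply]
      simpa [smul_eq_mul] using hva
    funext i
    exact Fintype.linearIndependent_iff.mp hA v hsum i
  obtain ⟨K, hK⟩ := LinearMap.exists_leftInverse_of_injective _ hker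
  refine ⟨Matrix.of fun x i => K (Pi.single x 1) i, ?_⟩
  ext i i'
  have h1 : A i = ∑ x, A i x • (Pi.single x (1 : Fq) : Fin n → Fq) := by
    funext y
    rw [Finset.sum_apply]
    rw [Finset.sum_eq_single y]
    · simp
    · intro x _ hx
      simp [Pi.single_apply, hx]
    · simp
  have h2 : K (A i) = Pi.single i 1 := by
    have hAi : A i = Matrix.vecMulLinear (R := Fq) A (Pi.single i 1) := by
      rw [Matrix.vecMulLinear_apply, Matrix.single_one_vecMul]; rfl
    rw [hAi, ← LinearMap.comp_apply, hK, LinearMap.id_apply]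
  have h3 : K (A i) i' = ∑ x, A i x * K (Pi.single x 1) i' := by
    conv_lhs => rw [h1]
    rw [map_sum]
    rw [Finset.sum_apply]
    refine Finset.sum_congr rfl fun x _ => ?_
    rw [_root_.map_smul]
    rfl
  rw [Matrix.mul_apply]
  rw [show ∑ x, A i x * (Matrix.of fun x i => K (Pi.single x 1) i) x i' = K (A i) i' from
    (h3.symm ▸ rfl)]
  rw [h2]
  rw [Matrix.one_apply]
  simp [Pi.single_apply, eq_comm]

end DiagAux

theorem statement13 {Fq : Type*} [Field Fq] [Fintype Fq]
    {Fqm : Type*} [Field Fqm] [Algebra Fq Fqm]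
    {g r d k : ℕ} (hg : 0 < g) (hr : 0 < r) (hd : 0 < d)
    (hq : r + d - 1 ≤ Fintype.card Fq)
    (Cout : Submodule (Polynomial Fqm) (Fin g × Fin r → Polynomial Fqm))
    (hout : IsConvCode Cout k)
    (A : Matrix (Fin r) (Fin (r + d - 1)) Fq)
    (hA1 : LinearIndependent Fq (fun i => A i))
    (hA2 : ∀ u : Fin r → Fq, u ≠ 0 → d ≤ hWt (Matrix.vecMul u A)) :
    ∀ (Go : Matrix (Fin k) (Fin g × Fin r) (Polynomial Fqm))
      (Gg : Matrix (Fin k) (Fin g × Fin (r + d - 1)) (Polynomial Fqm)),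
      IsRedGenMat Cout Go → IsRedGenMat (globCode Fq Cout A) Gg →
      (∑ i, rowDeg Go i = ∑ i, rowDeg Gg i) ∧
      (Finset.univ.sup (rowDeg Go) = Finset.univ.sup (rowDeg Gg)) := by
  intro Go Gg hGo hGg
  classical
  obtain ⟨B, hB⟩ := exists_right_inverse Fq A hA1
  set M := diagMap (Fqm := Fqm) Fq g A with hM
  set N := diagMap (Fqm := Fqm) Fq g B with hN
  have hMN : M * N = 1 := by rw [hM, hN, diagMap_mul, hB, diagMap_one]
  have hMdeg : ∀ x y, (M x y).natDegree = 0 := fun x y => diagMap_natDegree Fq A x y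
  have hNdeg : ∀ x y, (N x y).natDegree = 0 := fun x y => diagMap_natDegree Fq B x y
  have hglob : globCode Fq Cout A = Cout.map (Matrix.vecMulLinear M) := rfl
  rw [hglob] at hGg
  obtain ⟨Go', hGo'gen, hGo'M⟩ := exists_genmat_pullback hMN hGg.1
  have hdeq : ∀ i, rowDeg Go' i = rowDeg Gg i := by
    intro i
    rw [← hGo'M]
    exact (rowDeg_mul_rightInv Go' hMN hMdeg hNdeg i).symm
  have hred' : IsRedGenMat Cout Go' := by
    refine ⟨hGo'gen, ?_⟩
    intro H hH
    have h1 : IsGenMat (Cout.map (Matrix.vecMulLinear M)) (H * M) := isGenMat_map hMN hH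
    have h2 := hGg.2 (H * M) h1
    calc ∑ i, rowDeg Go' i = ∑ i, rowDeg Gg i :=
          Finset.sum_congr rfl fun i _ => hdeq i
      _ ≤ ∑ i, rowDeg (H * M) i := h2
      _ = ∑ i, rowDeg H i :=
          Finset.sum_congr rfl fun i _ => rowDeg_mul_rightInv H hMN hMdeg hNdeg i
  have hsum' : ∑ i, rowDeg Go' i = ∑ i, rowDeg Gg i :=
    Finset.sum_congr rfl fun i _ => hdeq i
  constructor
  · have hle1 : ∑ i, rowDeg Go i ≤ ∑ i, rowDeg Go' i := hGo.2 Go' hGo'gen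
    have hle2 : ∑ i, rowDeg Go' i ≤ ∑ i, rowDeg Go i := hred'.2 Go hGo.1
    omega
  · have hsup := sup_rowDeg_eq hGo hred'
    rw [hsup]
    exact Finset.sup_congr rfl fun i _ => hdeq i


end LRCC
end
end

section
/- Let F be a finite field, ∂ ≥ 2, and let C_0 ⊆ F^n be a k-dimensional linear block code (k ≥ 1) whose coordinate set {1,...,n} is partitioned into pairwise disjoint local groups Γ_1,...,Γ_g, each of size exactly r+∂−1, such that every nonzero codeword of the restriction (C_0)_{Γ_i} has Hamming weight at least ∂ for each i = 1,...,g. Let ℓ = ⌈k/r⌉ and assume the minimum Hamming distance of C_0 equals (n−k) − (ℓ−1)(∂−1) + 1. Then there exist ℓ indices i_1 < i_2 < ... < i_ℓ in {1,...,g} such that the restriction of C_0 to Γ_{i_1} ∪ Γ_{i_2} ∪ ... ∪ Γ_{i_ℓ} has dimension k (equivalently, the projection of C_0 onto these coordinates is injective). -/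
open Polynomial Matrix Finset

noncomputable section

namespace LRCC

variable {F : Type*} [Field F] {ι : Type*} [Fintype ι] {k : ℕ}

set_option maxHeartbeats 1000000 in
theorem statement16 {F : Type*} [Field F] [Fintype F] [DecidableEq F]
    {n k r d g D : ℕ} (hd : 2 ≤ d) (hk : 1 ≤ k) (hr : 0 < r)
    (C0 : Submodule F (Fin n → F)) (hdim : Module.finrank F C0 = k)
    (Γ : Fin g → Finset (Fin n))
    (hcover : ∀ x : Fin n, ∃ a, x ∈ Γ a)
    (hdisj : ∀ a b, a ≠ b → Disjoint (Γ a) (Γ b))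
    (hsize : ∀ a, (Γ a).card = r + d - 1)
    (hloc : ∀ a, ∀ v ∈ C0, (∃ x ∈ Γ a, v x ≠ 0) →
      d ≤ ((Γ a).filter fun x => v x ≠ 0).card)
    (hD : (D : ℤ) = ((n : ℤ) - k) - ((((k + r - 1) / r : ℕ) : ℤ) - 1) * ((d : ℤ) - 1) + 1)
    (hdist : IsLeast {w : ℕ | ∃ v ∈ C0, v ≠ 0 ∧ hWt v = w} D) :
    ∃ e : Fin ((k + r - 1) / r) → Fin g, Function.Injective e ∧
      ∀ v ∈ C0, (∀ x : Fin n, (∃ t, x ∈ Γ (e t)) → v x = 0) → v = 0 := by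
  classical
  set ℓ := (k + r - 1) / r with hℓdef
  have hmod := Nat.div_add_mod (k + r - 1) r
  have hmlt : (k + r - 1) % r < r := Nat.mod_lt _ hr
  rw [← hℓdef] at hmod
  have hk1 : k ≤ r * ℓ := by
    generalize hP : r * ℓ = P at hmod; omega
  have hk2 : r * ℓ ≤ k + r - 1 := by
    generalize hP : r * ℓ = P at hmod; omega
  have hk1z : (k : ℤ) ≤ (r : ℤ) * ℓ := by
    have := hk1; zify at this; exact this
  have hk2z : (r : ℤ) * ℓ ≤ (k : ℤ) + r - 1 := by
    have := hk2; zify [show 1 ≤ k + r by omega] at this; linarith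
  set s := r + d - 1 with hsdef
  have hsval : (s : ℤ) = (r : ℤ) + d - 1 := by omega
  -- n = g * s
  have hbi : (Finset.univ.biUnion Γ) = (Finset.univ : Finset (Fin n)) := by
    ext x
    simp only [Finset.mem_biUnion, Finset.mem_univ, true_and, iff_true]
    exact hcover x
  have hn : n = g * s := by
    have h1 : (Finset.univ.biUnion Γ).card = ∑ a, (Γ a).card :=
      Finset.card_biUnion (fun a _ b _ hab => hdisj a b hab)
    rw [hbi, Finset.card_univ, Fintype.card_fin] at h1
    rw [h1]
    simp [hsize, Finset.sum_const, Finset.card_univ, mul_comm]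
  have hnz : (n : ℤ) = (g : ℤ) * s := by exact_mod_cast congrArg (Nat.cast (R := ℤ)) hn
  obtain ⟨⟨v0, hv0C, hv0ne, hv0w⟩, hleast⟩ := hdist
  have hD1 : 1 ≤ D := by
    rw [← hv0w]
    haveI : Nonempty {a // v0 a ≠ 0} := by
      obtain ⟨x, hx⟩ := Function.ne_iff.mp hv0ne
      exact ⟨⟨x, hx⟩⟩
    exact Nat.card_pos
  -- ℓ ≤ g
  have hlg : ℓ ≤ g := by
    by_contra h
    push_neg at h
    have hgl : (g : ℤ) ≤ (ℓ : ℤ) - 1 := by omega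
    have hDl : (1 : ℤ) ≤ (D : ℤ) := by exact_mod_cast hD1
    have key := mul_le_mul_of_nonneg_right hgl (show (0 : ℤ) ≤ s by omega)
    rw [hsval] at key
    nlinarith [hD, hDl, hk2z, hnz, key, hsval]
  refine ⟨Fin.castLE hlg, Fin.castLE_injective hlg, ?_⟩
  intro v hvC hvz
  by_contra hvne
  have hDle : D ≤ hWt v := hleast ⟨v, hvC, hvne, rfl⟩
  set Sset := (Finset.univ : Finset (Fin ℓ)).biUnion (fun t => Γ (Fin.castLE hlg t)) with hSset
  have hScard : Sset.card = ℓ * s := by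
    rw [hSset, Finset.card_biUnion]
    · simp [hsize, Finset.sum_const, Finset.card_univ, mul_comm]
    · intro a _ b _ hab
      exact hdisj _ _ (fun hh => hab (Fin.castLE_injective hlg hh))
  have hsub : (Finset.univ.filter fun x => v x ≠ 0) ⊆ Finset.univ \ Sset := by
    intro x hx
    simp only [Finset.mem_filter, Finset.mem_univ, true_and] at hx
    simp only [Finset.mem_sdiff, Finset.mem_univ, true_and]
    intro hxS
    rw [hSset] at hxS
    simp only [Finset.mem_biUnion, Finset.mem_univ, true_and] at hxS
    obtain ⟨t, ht⟩ := hxS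
    exact hx (hvz x ⟨t, ht⟩)
  have h1 : hWt v = (Finset.univ.filter fun x => v x ≠ 0).card := by
    simp [hWt, Nat.card_eq_fintype_card, Fintype.card_subtype]
  have hwle : hWt v ≤ n - ℓ * s := by
    calc hWt v = (Finset.univ.filter fun x => v x ≠ 0).card := h1
    _ ≤ (Finset.univ \ Sset).card := Finset.card_le_card hsub
    _ = n - ℓ * s := by
        rw [Finset.card_sdiff_of_subset (Finset.subset_univ _), hScard, Finset.card_univ,
          Fintype.card_fin]
  have hls : ℓ * s ≤ n := by
    rw [hn]; exact Nat.mul_le_mul_right _ hlg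
  have hfin : (D : ℤ) ≤ (n : ℤ) - (ℓ : ℤ) * s := by
    have h2 : D ≤ n - ℓ * s := le_trans hDle hwle
    zify [hls] at h2; linarith
  rw [hsval] at hfin
  nlinarith [hD, hfin, hk1z, hd]


end LRCC
end
end
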